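/- arXiv:2510.23177 — 8 statements merged into one kernel-verified Lean document; each statement's English description precedes it below -/
import Mathlib

section
/- For every ε > 0, sup_{t ∈ [0,T]} |τ_ε⁻¹(t) − t| ≤ ε ∫₀ᵀ |m_ε(s)| ds, and for every t ∈ [0,T], the difference quotient (τ_ε⁻¹(t) − t)/ε converges, as ε → 0⁺, to −m̂(t) = −∫₀ᵗ m(s) ds. -/
open MeasureTheory Set Filter

/-- `sup_{t ∈ [0,T]} |τ_ε⁻¹(t) − t| ≤ ε ∫₀ᵀ |m_ε(s)| ds`, and for each `t ∈ [0,T]` the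
difference quotient `(τ_ε⁻¹(t) − t)/ε` converges to `−m̂(t) = −∫₀ᵗ m(s) ds` as `ε → 0⁺`. -/
theorem inverse_reparametrization_difference_quotient
    (T : ℝ) (hT : 0 < T) (m : ℝ → ℝ)
    (hm : MemLp m 2 (volume.restrict (Icc 0 T)))
    (hint : ∫ s in (0:ℝ)..T, m s = 0)
    (mtil meps : ℝ → ℝ → ℝ)
    (hmtil : ∀ ε s, mtil ε s = max (-(1 / (3 * ε))) (min (m s) (1 / (3 * ε))))
    (hmeps : ∀ ε s, meps ε s = mtil ε s - (1 / T) * ∫ u in (0:ℝ)..T, mtil ε u)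
    (τ : ℝ → ℝ → ℝ)
    (hτ : ∀ ε s, τ ε s = ∫ u in (0:ℝ)..s, (1 + ε * meps ε u))
    (τinv : ℝ → ℝ → ℝ)
    (hτinv : ∀ ε > (0:ℝ), InvOn (τinv ε) (τ ε) (Icc 0 T) (Icc 0 T) ∧
      MapsTo (τinv ε) (Icc 0 T) (Icc 0 T)) :
    (∀ ε > (0:ℝ), ∀ t ∈ Icc (0:ℝ) T,
      |τinv ε t - t| ≤ ε * ∫ s in (0:ℝ)..T, |meps ε s|) ∧
    (∀ t ∈ Icc (0:ℝ) T,
      Tendsto (fun ε : ℝ => (τinv ε t - t) / ε) (nhdsWithin 0 (Ioi 0))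
        (nhds (-∫ s in (0:ℝ)..t, m s))) := by
  haveI := Fact.mk (measure_Icc_lt_top (a := (0:ℝ)) (b := T) (μ := volume))
  have h0T : (0:ℝ) ∈ Icc (0:ℝ) T := ⟨le_rfl, hT.le⟩
  have hTT : T ∈ Icc (0:ℝ) T := ⟨hT.le, le_rfl⟩
  have hmm : AEStronglyMeasurable m (volume.restrict (Icc 0 T)) := hm.aestronglyMeasurable
  have hmInt : IntegrableOn m (Icc 0 T) := hm.integrable one_le_two
  -- pointwise bound on the truncation
  have htriv : ∀ ε : ℝ, 0 < ε → ∀ s, |mtil ε s| ≤ |m s| := by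
    intro ε hε s
    rw [hmtil]
    have hc : 0 < 1 / (3 * ε) := by positivity
    rw [abs_le]
    constructor
    · exact le_max_of_le_right (le_min (neg_abs_le _) (by linarith [abs_nonneg (m s)]))
    · exact max_le (by linarith [abs_nonneg (m s)])
        ((min_le_left _ _).trans (le_abs_self _))
  have hmtilMeas : ∀ ε : ℝ, AEStronglyMeasurable (mtil ε) (volume.restrict (Icc 0 T)) := by
    intro ε
    have : mtil ε = fun s => max (-(1 / (3 * ε))) (min (m s) (1 / (3 * ε))) :=
      funext (hmtil ε)
    rw [this]
    exact (continuous_const.max (continuous_id.min continuous_const)).comp_aestronglyMeasurable hmm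
  have hmtilInt : ∀ ε : ℝ, 0 < ε → IntegrableOn (mtil ε) (Icc 0 T) := by
    intro ε hε
    refine Integrable.mono hmInt (hmtilMeas ε) ?_
    filter_upwards with s
    simpa [Real.norm_eq_abs] using htriv ε hε s
  have hmepsInt : ∀ ε : ℝ, 0 < ε → IntegrableOn (meps ε) (Icc 0 T) := by
    intro ε hε
    have : meps ε = fun s => mtil ε s - (1 / T) * ∫ u in (0:ℝ)..T, mtil ε u :=
      funext (hmeps ε)
    rw [this]
    exact (hmtilInt ε hε).sub (integrableOn_const (measure_Icc_lt_top.ne))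
  -- generic interval integrability inside [0,T]
  have hII : ∀ {f : ℝ → ℝ}, IntegrableOn f (Icc 0 T) → ∀ a ∈ Icc (0:ℝ) T, ∀ b ∈ Icc (0:ℝ) T,
      IntervalIntegrable f volume a b := by
    intro f hf a ha b hb
    exact (hf.mono_set (uIcc_subset_Icc ha hb)).intervalIntegrable
  -- key identity for τ
  have hkey : ∀ ε : ℝ, 0 < ε → ∀ s ∈ Icc (0:ℝ) T, τ ε s = s + ε * ∫ u in (0:ℝ)..s, meps ε u := by
    intro ε hε s hs
    rw [hτ]
    rw [intervalIntegral.integral_add intervalIntegrable_const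
      ((hII (hmepsInt ε hε) 0 h0T s hs).const_mul ε),
      intervalIntegral.integral_const_mul]
    simp
  -- difference formula
  have hdiff : ∀ ε : ℝ, 0 < ε → ∀ t ∈ Icc (0:ℝ) T,
      τinv ε t - t = -(ε * ∫ u in (0:ℝ)..(τinv ε t), meps ε u) := by
    intro ε hε t ht
    obtain ⟨hinv, hmaps⟩ := hτinv ε hε
    have hs : τinv ε t ∈ Icc 0 T := hmaps ht
    have h1 : τ ε (τinv ε t) = t := hinv.2 ht
    have h2 := hkey ε hε (τinv ε t) hs
    rw [h1] at h2
    linarith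
  -- Part 1
  have hpart1 : ∀ ε > (0:ℝ), ∀ t ∈ Icc (0:ℝ) T,
      |τinv ε t - t| ≤ ε * ∫ s in (0:ℝ)..T, |meps ε s| := by
    intro ε hε t ht
    obtain ⟨hinv, hmaps⟩ := hτinv ε hε
    have hs : τinv ε t ∈ Icc 0 T := hmaps ht
    rw [hdiff ε hε t ht, abs_neg, abs_mul, abs_of_pos hε]
    refine mul_le_mul_of_nonneg_left ?_ hε.le
    calc |∫ u in (0:ℝ)..(τinv ε t), meps ε u|
        ≤ ∫ u in (0:ℝ)..(τinv ε t), |meps ε u| :=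
          intervalIntegral.abs_integral_le_integral_abs hs.1
      _ ≤ ∫ s in (0:ℝ)..T, |meps ε s| := by
          refine intervalIntegral.integral_mono_interval le_rfl hs.1 hs.2 ?_
            (hII (hmepsInt ε hε).abs 0 h0T T hTT)
          filter_upwards with x using abs_nonneg _
  refine ⟨hpart1, ?_⟩
  -- Part 2
  intro t ht
  set A : ℝ := ∫ u in (0:ℝ)..T, |m u| with hA
  have hIabs : ∀ ε : ℝ, 0 < ε → |∫ u in (0:ℝ)..T, mtil ε u| ≤ A := by
    intro ε hε
    calc |∫ u in (0:ℝ)..T, mtil ε u| ≤ ∫ u in (0:ℝ)..T, |mtil ε u| :=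
          intervalIntegral.abs_integral_le_integral_abs hT.le
      _ ≤ A := intervalIntegral.integral_mono_on hT.le (hII (hmtilInt ε hε).abs 0 h0T T hTT)
          (hII hmInt.abs 0 h0T T hTT) (fun x _ => htriv ε hε x)
  have hC : ∀ ε : ℝ, 0 < ε → ∫ s in (0:ℝ)..T, |meps ε s| ≤ 2 * A := by
    intro ε hε
    have hb : ∀ x ∈ Icc (0:ℝ) T, |meps ε x| ≤ |m x| + A / T := by
      intro x _
      rw [hmeps]
      calc |mtil ε x - (1 / T) * ∫ u in (0:ℝ)..T, mtil ε u|
          ≤ |mtil ε x| + |(1 / T) * ∫ u in (0:ℝ)..T, mtil ε u| := abs_sub _ _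
        _ ≤ |m x| + A / T := by
            have h1 := htriv ε hε x
            have h2 : |(1 / T) * ∫ u in (0:ℝ)..T, mtil ε u| ≤ A / T := by
              rw [abs_mul, abs_of_pos (by positivity : (0:ℝ) < 1 / T),
                div_eq_mul_inv A T, one_div, mul_comm A T⁻¹]
              exact mul_le_mul_of_nonneg_left (hIabs ε hε) (inv_pos.2 hT).le
            linarith
    calc ∫ s in (0:ℝ)..T, |meps ε s| ≤ ∫ s in (0:ℝ)..T, (|m s| + A / T) :=
          intervalIntegral.integral_mono_on hT.le (hII (hmepsInt ε hε).abs 0 h0T T hTT)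
            ((hII hmInt.abs 0 h0T T hTT).add intervalIntegrable_const) hb
      _ = A + T * (A / T) := by
          rw [intervalIntegral.integral_add (hII hmInt.abs 0 h0T T hTT) intervalIntegrable_const,
            intervalIntegral.integral_const]
          simp [smul_eq_mul]
          exact hA.symm
      _ = 2 * A := by field_simp; ring
  -- S ε := τinv ε t tends to t
  set S : ℝ → ℝ := fun ε => τinv ε t with hSdef
  have hSmem : ∀ ε : ℝ, 0 < ε → S ε ∈ Icc (0:ℝ) T := fun ε hε => (hτinv ε hε).2 ht
  have hStend : Tendsto S (nhdsWithin 0 (Ioi 0)) (nhds t) := by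
    have h0 : Tendsto (fun ε => S ε - t) (nhdsWithin 0 (Ioi 0)) (nhds 0) := by
      refine squeeze_zero_norm' (a := fun ε => ε * (2 * A)) ?_ ?_
      · filter_upwards [eventually_nhdsWithin_of_forall (fun ε (hε : ε ∈ Ioi (0:ℝ)) => hε)]
          with ε hε
        calc ‖S ε - t‖ = |τinv ε t - t| := rfl
          _ ≤ ε * ∫ s in (0:ℝ)..T, |meps ε s| := hpart1 ε hε t ht
          _ ≤ ε * (2 * A) := by
              refine mul_le_mul_of_nonneg_left (hC ε hε) (le_of_lt hε)
      · have : Tendsto (fun ε : ℝ => ε * (2 * A)) (nhds 0) (nhds (0 * (2 * A))) :=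
          (continuous_id.mul continuous_const).tendsto 0
        simpa using this.mono_left nhdsWithin_le_nhds
    have := h0.add_const t
    simpa using this
  -- pointwise convergence of the truncation
  have hptw : ∀ u : ℝ, Tendsto (fun ε => mtil ε u) (nhdsWithin 0 (Ioi 0)) (nhds (m u)) := by
    intro u
    refine Tendsto.congr' ?_ tendsto_const_nhds
    have hδ : (0:ℝ) ∈ Ico (0:ℝ) (1 / (3 * (|m u| + 1))) :=
      ⟨le_rfl, by positivity⟩
    filter_upwards [Ioo_mem_nhdsGT_of_mem hδ] with ε hε
    have hε0 : 0 < ε := hε.1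
    have hc : |m u| + 1 ≤ 1 / (3 * ε) := by
      have h2 : ε < 1 / (3 * (|m u| + 1)) := hε.2
      rw [lt_div_iff₀ (by positivity)] at h2
      rw [le_div_iff₀ (by positivity)]
      nlinarith
    rw [hmtil]
    have h1 : m u ≤ 1 / (3 * ε) := le_trans (le_abs_self _) (by linarith)
    have h2 : -(1 / (3 * ε)) ≤ m u := by
      have := neg_abs_le (m u); linarith
    rw [min_eq_left h1, max_eq_right h2]
  -- dominated convergence
  have hDCT : ∀ t' ∈ Icc (0:ℝ) T, Tendsto (fun ε => ∫ u in (0:ℝ)..t', mtil ε u)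
      (nhdsWithin 0 (Ioi 0)) (nhds (∫ u in (0:ℝ)..t', m u)) := by
    intro t' ht'
    have hsub : Ioc (0:ℝ) t' ⊆ Icc 0 T :=
      Ioc_subset_Icc_self.trans (Icc_subset_Icc le_rfl ht'.2)
    have hle : volume.restrict (Ioc (0:ℝ) t') ≤ volume.restrict (Icc (0:ℝ) T) :=
      Measure.restrict_mono hsub le_rfl
    have key : Tendsto (fun ε => ∫ u in Ioc (0:ℝ) t', mtil ε u)
        (nhdsWithin 0 (Ioi 0)) (nhds (∫ u in Ioc (0:ℝ) t', m u)) := by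
      refine MeasureTheory.tendsto_integral_filter_of_dominated_convergence
        (fun u => |m u|) ?_ ?_ ?_ ?_
      · exact Filter.Eventually.of_forall (fun ε => (hmtilMeas ε).mono_measure hle)
      · filter_upwards [eventually_nhdsWithin_of_forall (fun ε (hε : ε ∈ Ioi (0:ℝ)) => hε)]
          with ε hε
        filter_upwards with u
        simpa [Real.norm_eq_abs] using htriv ε hε u
      · exact MeasureTheory.IntegrableOn.mono_set hmInt.abs hsub
      · filter_upwards with u using hptw u
    simp only [intervalIntegral.integral_of_le ht'.1]
    exact key
  have hI0 : Tendsto (fun ε => ∫ u in (0:ℝ)..T, mtil ε u) (nhdsWithin 0 (Ioi 0)) (nhds 0) := by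
    have := hDCT T hTT
    rwa [hint] at this
  have hIt := hDCT t ht
  -- continuous primitive of indicator of |m|
  set g : ℝ → ℝ := (Icc (0:ℝ) T).indicator (fun u => |m u|) with hg
  have hgInt : Integrable g := MeasureTheory.IntegrableOn.integrable_indicator hmInt.abs measurableSet_Icc
  set F : ℝ → ℝ := fun x => ∫ u in (0:ℝ)..x, g u with hF
  have hFcont : Continuous F :=
    intervalIntegral.continuous_primitive (fun a b => hgInt.intervalIntegrable) 0
  have hgeq : ∀ x ∈ Icc (0:ℝ) T, g x = |m x| := fun x hx => indicator_of_mem hx _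
  -- middle term bound
  have hmid : ∀ ε : ℝ, 0 < ε → |∫ u in t..(S ε), mtil ε u| ≤ |F (S ε) - F t| := by
    intro ε hε
    have hs := hSmem ε hε
    have hFdiff : F (S ε) - F t = ∫ u in t..(S ε), g u :=
      intervalIntegral.integral_interval_sub_left hgInt.intervalIntegrable
        hgInt.intervalIntegrable
    rw [hFdiff]
    rcases le_total t (S ε) with hts | hst
    · calc |∫ u in t..(S ε), mtil ε u| ≤ ∫ u in t..(S ε), |mtil ε u| :=
            intervalIntegral.abs_integral_le_integral_abs hts
        _ ≤ ∫ u in t..(S ε), g u := by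
            refine intervalIntegral.integral_mono_on hts
              (hII (hmtilInt ε hε).abs t ht (S ε) hs) hgInt.intervalIntegrable ?_
            intro x hx
            have hx' : x ∈ Icc (0:ℝ) T := Icc_subset_Icc ht.1 hs.2 hx
            rw [hgeq x hx']
            exact htriv ε hε x
        _ ≤ |∫ u in t..(S ε), g u| := le_abs_self _
    · rw [intervalIntegral.integral_symm, intervalIntegral.integral_symm (a := S ε) (b := t),
        abs_neg, abs_neg]
      calc |∫ u in (S ε)..t, mtil ε u| ≤ ∫ u in (S ε)..t, |mtil ε u| :=
            intervalIntegral.abs_integral_le_integral_abs hst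
        _ ≤ ∫ u in (S ε)..t, g u := by
            refine intervalIntegral.integral_mono_on hst
              (hII (hmtilInt ε hε).abs (S ε) hs t ht) hgInt.intervalIntegrable ?_
            intro x hx
            have hx' : x ∈ Icc (0:ℝ) T := Icc_subset_Icc hs.1 ht.2 hx
            rw [hgeq x hx']
            exact htriv ε hε x
        _ ≤ |∫ u in (S ε)..t, g u| := le_abs_self _
  have hmidtend : Tendsto (fun ε => ∫ u in t..(S ε), mtil ε u)
      (nhdsWithin 0 (Ioi 0)) (nhds 0) := by
    refine squeeze_zero_norm' (a := fun ε => |F (S ε) - F t|) ?_ ?_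
    · filter_upwards [eventually_nhdsWithin_of_forall (fun ε (hε : ε ∈ Ioi (0:ℝ)) => hε)]
        with ε hε
      simpa [Real.norm_eq_abs] using hmid ε hε
    · have h1 : Tendsto (fun ε => F (S ε)) (nhdsWithin 0 (Ioi 0)) (nhds (F t)) :=
        (hFcont.tendsto t).comp hStend
      have h2 : Tendsto (fun ε => |F (S ε) - F t|) (nhdsWithin 0 (Ioi 0)) (nhds (|F t - F t|)) :=
        ((h1.sub_const (F t)).abs)
      simpa using h2
  -- main eventual identity
  have hident : ∀ ε : ℝ, 0 < ε →
      (τinv ε t - t) / ε =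
        -((∫ u in (0:ℝ)..t, mtil ε u) + ∫ u in t..(S ε), mtil ε u)
          + S ε * ((1 / T) * ∫ u in (0:ℝ)..T, mtil ε u) := by
    intro ε hε
    have hs := hSmem ε hε
    have hd := hdiff ε hε t ht
    have hsplit : ∫ u in (0:ℝ)..(S ε), meps ε u =
        ((∫ u in (0:ℝ)..t, mtil ε u) + ∫ u in t..(S ε), mtil ε u)
          - S ε * ((1 / T) * ∫ u in (0:ℝ)..T, mtil ε u) := by
      have e1 : ∫ u in (0:ℝ)..(S ε), meps ε u =
          (∫ u in (0:ℝ)..(S ε), mtil ε u)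
            - S ε * ((1 / T) * ∫ u in (0:ℝ)..T, mtil ε u) := by
        have : (fun u => meps ε u) =
            fun u => mtil ε u - (1 / T) * ∫ u in (0:ℝ)..T, mtil ε u :=
          funext (hmeps ε)
        rw [intervalIntegral.integral_congr (g := fun u =>
            mtil ε u - (1 / T) * ∫ u in (0:ℝ)..T, mtil ε u) (fun x _ => hmeps ε x),
          intervalIntegral.integral_sub (hII (hmtilInt ε hε) 0 h0T (S ε) hs)
            intervalIntegrable_const, intervalIntegral.integral_const]
        simp [smul_eq_mul]
      have e2 : (∫ u in (0:ℝ)..t, mtil ε u) + ∫ u in t..(S ε), mtil ε u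
          = ∫ u in (0:ℝ)..(S ε), mtil ε u :=
        intervalIntegral.integral_add_adjacent_intervals
          (hII (hmtilInt ε hε) 0 h0T t ht) (hII (hmtilInt ε hε) t ht (S ε) hs)
      rw [e1, e2]
    rw [hd, hsplit]
    field_simp
    ring
  -- conclude
  have hRHS : Tendsto (fun ε =>
      -((∫ u in (0:ℝ)..t, mtil ε u) + ∫ u in t..(S ε), mtil ε u)
        + S ε * ((1 / T) * ∫ u in (0:ℝ)..T, mtil ε u))
      (nhdsWithin 0 (Ioi 0)) (nhds (-∫ s in (0:ℝ)..t, m s)) := by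
    have h1 : Tendsto (fun ε => ((∫ u in (0:ℝ)..t, mtil ε u) + ∫ u in t..(S ε), mtil ε u))
        (nhdsWithin 0 (Ioi 0)) (nhds ((∫ u in (0:ℝ)..t, m u) + 0)) := hIt.add hmidtend
    have h2 : Tendsto (fun ε => S ε * ((1 / T) * ∫ u in (0:ℝ)..T, mtil ε u))
        (nhdsWithin 0 (Ioi 0)) (nhds (t * ((1 / T) * 0))) :=
      hStend.mul (tendsto_const_nhds.mul hI0)
    have := h1.neg.add h2
    simpa using this
  refine hRHS.congr' ?_
  filter_upwards [eventually_nhdsWithin_of_forall (fun ε (hε : ε ∈ Ioi (0:ℝ)) => hε)]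
    with ε hε
  exact (hident ε hε).symm
end

section
/- Let T > 0, n ≥ 1, and let 0 = t₀ ≤ t₁ ≤ ⋯ ≤ tₙ ≤ t_{n+1} = T. Then for every c ∈ ℝⁿ, T · Σ_{i,j=1}^{n} (min(t_i,t_j) − t_i t_j / T) c_i c_j = Σ_{1 ≤ k ≤ ℓ ≤ n} (t_k − t_{k−1})(t_{ℓ+1} − t_ℓ) (Σ_{i=k}^{ℓ} c_i)². -/
open Finset

private lemma lagrange_id (f g : ℕ → ℝ) (N : ℕ) :
    (∑ k ∈ range N, f k) * (∑ k ∈ range N, f k * g k ^ 2)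
      - (∑ k ∈ range N, f k * g k) ^ 2
    = ∑ k ∈ range N, ∑ l ∈ range k, f k * f l * (g k - g l) ^ 2 := by
  induction N with
  | zero => simp
  | succ N ih =>
    rw [sum_range_succ, sum_range_succ, sum_range_succ, sum_range_succ]
    have key : ∑ l ∈ range N, f N * f l * (g N - g l) ^ 2
        = g N ^ 2 * (f N * ∑ k ∈ range N, f k)
          + f N * ∑ k ∈ range N, f k * g k ^ 2
          - 2 * g N * (f N * ∑ k ∈ range N, f k * g k) := by
      simp only [mul_sum, ← sum_add_distrib, ← sum_sub_distrib]
      exact sum_congr rfl fun l _ => by ring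
    rw [key, ← ih]; ring

/-- Exact quadratic-form decomposition for the Brownian-bridge kernel
`ξ_{ij} = min(t_i,t_j) − t_i t_j / T` with `t₀ = 0` and `t_{n+1} = T`:
`T·Σ_{i,j=1}^n ξ_{ij} c_i c_j
  = Σ_{1 ≤ k ≤ ℓ ≤ n} (t_k − t_{k−1})(t_{ℓ+1} − t_ℓ)(Σ_{i=k}^ℓ c_i)²`. -/
theorem bridge_kernel_decomposition
    (T : ℝ) (hT : 0 < T) (n : ℕ) (hn : 1 ≤ n)
    (t : ℕ → ℝ) (h0 : t 0 = 0) (hlast : t (n + 1) = T)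
    (hmono : ∀ k ≤ n, t k ≤ t (k + 1)) (c : ℕ → ℝ) :
    T * ∑ i ∈ Finset.Icc 1 n, ∑ j ∈ Finset.Icc 1 n,
        (min (t i) (t j) - t i * t j / T) * c i * c j
      = ∑ k ∈ Finset.Icc 1 n, ∑ l ∈ Finset.Icc k n,
          (t k - t (k - 1)) * (t (l + 1) - t l) * (∑ i ∈ Finset.Icc k l, c i) ^ 2 := by
  have hne : T ≠ 0 := ne_of_gt hT
  set S : ℕ → ℝ := fun k => ∑ i ∈ Icc k n, c i with hSdef
  set F : ℕ → ℝ := fun k => t (k + 1) - t k with hFdef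
  -- sum of increments is T
  have hTF : ∑ k ∈ range (n + 1), F k = T := by
    rw [hFdef, sum_range_sub t (n + 1), h0, hlast, sub_zero]
  -- monotonicity up to n+1
  have ht : ∀ b ≤ n + 1, ∀ a ≤ b, t a ≤ t b := by
    intro b
    induction b with
    | zero => intro _ a ha; interval_cases a; exact le_rfl
    | succ b ihb =>
      intro hb a ha
      rcases Nat.lt_or_ge a (b + 1) with h | h
      · exact le_trans (ihb (by omega) a (by omega)) (hmono b (by omega))
      · have : a = b + 1 := by omega
        simp [this]
  -- t i as sum of increments
  have hfil : ∀ i ≤ n + 1, filter (fun k => k < i) (range (n + 1)) = range i := by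
    intro i hi; ext k; simp; omega
  have hti : ∀ i ≤ n + 1, t i = ∑ k ∈ range (n + 1), if k < i then F k else 0 := by
    intro i hi
    rw [← sum_filter, hfil i hi, hFdef]
    simp only
    rw [sum_range_sub t i, h0, sub_zero]
  -- min expansion
  have hmin : ∀ i ≤ n + 1, ∀ j ≤ n + 1,
      min (t i) (t j) = ∑ k ∈ range (n + 1), if k < i ∧ k < j then F k else 0 := by
    intro i hi j hj
    have h1 : min (t i) (t j) = t (min i j) := by
      rcases le_total i j with h | h
      · rw [min_eq_left (ht j hj i h), min_eq_left h]
      · rw [min_eq_right (ht i hi j h), min_eq_right h]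
    rw [h1, hti (min i j) (by omega)]
    exact sum_congr rfl fun k _ => by simp only [lt_min_iff, lt_inf_iff]
  -- filter of Icc
  have hSfil : ∀ k, filter (fun i => k < i) (Icc 1 n) = Icc (k + 1) n := by
    intro k; ext i; simp; omega
  have hSsum : ∀ k, ∑ i ∈ Icc 1 n, (if k < i then c i else 0) = S (k + 1) := by
    intro k; rw [← sum_filter, hSfil k, hSdef]
  -- the min double sum
  have hM : ∑ i ∈ Icc 1 n, ∑ j ∈ Icc 1 n, min (t i) (t j) * c i * c j
      = ∑ k ∈ range (n + 1), F k * S (k + 1) ^ 2 := by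
    have step : ∀ i ∈ Icc 1 n, ∀ j ∈ Icc 1 n,
        min (t i) (t j) * c i * c j
          = ∑ k ∈ range (n + 1), F k * ((if k < i then c i else 0) * (if k < j then c j else 0)) := by
      intro i hi j hj
      simp only [mem_Icc] at hi hj
      rw [hmin i (by omega) j (by omega), sum_mul, sum_mul]
      refine sum_congr rfl fun k _ => ?_
      by_cases h1 : k < i <;> by_cases h2 : k < j <;> simp [h1, h2] <;> ring
    calc ∑ i ∈ Icc 1 n, ∑ j ∈ Icc 1 n, min (t i) (t j) * c i * c j
        = ∑ i ∈ Icc 1 n, ∑ j ∈ Icc 1 n, ∑ k ∈ range (n + 1),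
            F k * ((if k < i then c i else 0) * (if k < j then c j else 0)) := by
          refine sum_congr rfl fun i hi => sum_congr rfl fun j hj => step i hi j hj
      _ = ∑ i ∈ Icc 1 n, ∑ k ∈ range (n + 1), ∑ j ∈ Icc 1 n,
            F k * ((if k < i then c i else 0) * (if k < j then c j else 0)) := by
          exact sum_congr rfl fun i _ => sum_comm
      _ = ∑ k ∈ range (n + 1), ∑ i ∈ Icc 1 n, ∑ j ∈ Icc 1 n,
            F k * ((if k < i then c i else 0) * (if k < j then c j else 0)) := sum_comm
      _ = ∑ k ∈ range (n + 1), F k * S (k + 1) ^ 2 := by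
          refine sum_congr rfl fun k _ => ?_
          simp only [← mul_sum, ← sum_mul]
          rw [hSsum k]; ring
  -- the linear sum
  have hP : ∑ i ∈ Icc 1 n, t i * c i = ∑ k ∈ range (n + 1), F k * S (k + 1) := by
    calc ∑ i ∈ Icc 1 n, t i * c i
        = ∑ i ∈ Icc 1 n, ∑ k ∈ range (n + 1), F k * (if k < i then c i else 0) := by
          refine sum_congr rfl fun i hi => ?_
          simp only [mem_Icc] at hi
          rw [hti i (by omega), sum_mul]
          refine sum_congr rfl fun k _ => ?_
          by_cases h1 : k < i <;> simp [h1]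
      _ = ∑ k ∈ range (n + 1), ∑ i ∈ Icc 1 n, F k * (if k < i then c i else 0) := sum_comm
      _ = ∑ k ∈ range (n + 1), F k * S (k + 1) := by
          refine sum_congr rfl fun k _ => ?_
          rw [← mul_sum, hSsum k]
  -- split the LHS
  have hsplit : ∑ i ∈ Icc 1 n, ∑ j ∈ Icc 1 n,
      (min (t i) (t j) - t i * t j / T) * c i * c j
      = (∑ i ∈ Icc 1 n, ∑ j ∈ Icc 1 n, min (t i) (t j) * c i * c j)
        - (∑ i ∈ Icc 1 n, t i * c i) ^ 2 / T := by
    rw [sq, sum_mul_sum, sum_div, ← sum_sub_distrib]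
    refine sum_congr rfl fun i _ => ?_
    rw [sum_div, ← sum_sub_distrib]
    refine sum_congr rfl fun j _ => ?_
    field_simp
  -- RHS as triangular range sum
  have hRHS : ∑ k ∈ Icc 1 n, ∑ l ∈ Icc k n,
      (t k - t (k - 1)) * (t (l + 1) - t l) * (∑ i ∈ Icc k l, c i) ^ 2
      = ∑ k ∈ range (n + 1), ∑ l ∈ range k, F k * F l * (S (k + 1) - S (l + 1)) ^ 2 := by
    have htail : ∀ k l, 1 ≤ k → k ≤ l → l ≤ n →
        ∑ i ∈ Icc k l, c i = S k - S (l + 1) := by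
      intro k l hk hkl hln
      have h := sum_Ico_consecutive c (show k ≤ l + 1 by omega) (show l + 1 ≤ n + 1 by omega)
      simp only [hSdef, ← Finset.Ico_add_one_right_eq_Icc]
      linarith [h]
    calc ∑ k ∈ Icc 1 n, ∑ l ∈ Icc k n,
          (t k - t (k - 1)) * (t (l + 1) - t l) * (∑ i ∈ Icc k l, c i) ^ 2
        = ∑ k ∈ Ico 1 (n + 1), ∑ l ∈ Ico k (n + 1),
          (t k - t (k - 1)) * (t (l + 1) - t l) * (S k - S (l + 1)) ^ 2 := by
          rw [← Finset.Ico_add_one_right_eq_Icc]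
          refine sum_congr rfl fun k hk => ?_
          simp only [mem_Ico] at hk
          rw [← Finset.Ico_add_one_right_eq_Icc]
          refine sum_congr rfl fun l hl => ?_
          simp only [mem_Ico] at hl
          rw [htail k l (by omega) (by omega) (by omega)]
      _ = ∑ l ∈ Ico 1 (n + 1), ∑ k ∈ Ico 1 (l + 1),
          (t k - t (k - 1)) * (t (l + 1) - t l) * (S k - S (l + 1)) ^ 2 :=
          sum_Ico_Ico_comm 1 (n + 1) _
      _ = ∑ a ∈ range n, ∑ b ∈ range (a + 1),
            F (a + 1) * F b * (S (a + 2) - S (b + 1)) ^ 2 := by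
          rw [sum_Ico_eq_sum_range]
          simp only [Nat.add_sub_cancel]
          refine sum_congr rfl fun a _ => ?_
          rw [Nat.add_comm 1 a, sum_Ico_eq_sum_range]
          simp only [Nat.add_sub_cancel]
          refine sum_congr rfl fun b _ => ?_
          rw [Nat.add_comm 1 b]
          simp only [Nat.add_sub_cancel, hFdef]
          have e : a + 1 + 1 = a + 2 := rfl
          rw [e]
          ring
      _ = ∑ k ∈ range (n + 1), ∑ l ∈ range k, F k * F l * (S (k + 1) - S (l + 1)) ^ 2 := by
          rw [sum_range_succ' (fun k => ∑ l ∈ range k, F k * F l * (S (k + 1) - S (l + 1)) ^ 2) n]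
          simp only [range_zero, sum_empty, add_zero]
  -- put everything together
  have key := lagrange_id F (fun k => S (k + 1)) (n + 1)
  rw [hsplit, hRHS, ← key, ← hM, ← hP, hTF]
  field_simp
end

section
/- Let T > 0, n ≥ 1, and let 0 = t₀ < t₁ < ⋯ < tₙ < T = t_{n+1}. Then for every c ∈ ℝⁿ, Σ_{i,j=1}^{n} (min(t_i,t_j) − t_i t_j / T) c_i c_j ≥ (1/T) Σ_{k=1}^{n} (t_k − t_{k−1})(t_{k+1} − t_k) c_k². In particular, the n×n symmetric matrix with entries min(t_i,t_j) − t_i t_j / T is positive definite. -/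
open Finset

theorem telesc (t : ℕ → ℝ) (m : ℕ) : ∑ k ∈ Icc 1 m, (t k - t (k-1)) = t m - t 0 := by
  have : Icc 1 m = Ico 1 (m+1) := by rw [Finset.Ico_add_one_right_eq_Icc]
  rw [this, Finset.sum_Ico_eq_sum_range]
  have h : ∀ i ∈ Finset.range (m + 1 - 1), t (1+i) - t (1+i-1) = t (i+1) - t i := by
    intro i _; congr 2 <;> omega
  rw [Finset.sum_congr rfl h, Finset.sum_range_sub]
  simp

theorem lagrange (s : Finset ℕ) (d x : ℕ → ℝ) :
    2 * ((∑ j ∈ s, d j) * ∑ j ∈ s, d j * x j ^ 2) =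
      2 * (∑ j ∈ s, d j * x j) ^ 2 + ∑ i ∈ s, ∑ j ∈ s, d i * d j * (x i - x j) ^ 2 := by
  have inner : ∀ i, ∑ j ∈ s, d i * d j * (x i - x j) ^ 2
      = (d i * x i ^ 2) * (∑ j ∈ s, d j) - (2 * (d i * x i)) * (∑ j ∈ s, d j * x j)
        + d i * (∑ j ∈ s, d j * x j ^ 2) := by
    intro i
    have : ∀ j ∈ s, d i * d j * (x i - x j) ^ 2
        = ((d i * x i ^ 2) * d j - (2 * (d i * x i)) * (d j * x j)) + d i * (d j * x j ^ 2) := by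
      intro j _; ring
    rw [Finset.sum_congr rfl this, Finset.sum_add_distrib, Finset.sum_sub_distrib,
      ← Finset.mul_sum, ← Finset.mul_sum, ← Finset.mul_sum]
  rw [Finset.sum_congr rfl (fun i _ => inner i), Finset.sum_add_distrib,
    Finset.sum_sub_distrib, ← Finset.sum_mul, ← Finset.sum_mul, ← Finset.sum_mul,
    ← Finset.mul_sum]
  ring

theorem adj_le (n : ℕ) (F : ℕ → ℕ → ℝ)
    (hF : ∀ i ∈ Icc 1 (n+1), ∀ j ∈ Icc 1 (n+1), 0 ≤ F i j)
    (hsymm : ∀ i j, F i j = F j i) :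
    2 * ∑ k ∈ Icc 1 n, F k (k+1) ≤ ∑ i ∈ Icc 1 (n+1), ∑ j ∈ Icc 1 (n+1), F i j := by
  classical
  set P1 : Finset (ℕ × ℕ) := (Icc 1 n).image (fun k => (k, k+1)) with hP1
  set P2 : Finset (ℕ × ℕ) := (Icc 1 n).image (fun k => (k+1, k)) with hP2
  have hs1 : ∑ p ∈ P1, F p.1 p.2 = ∑ k ∈ Icc 1 n, F k (k+1) := by
    rw [hP1, Finset.sum_image]
    intro a _ b _ h; simpa using (Prod.ext_iff.mp h).1
  have hs2 : ∑ p ∈ P2, F p.1 p.2 = ∑ k ∈ Icc 1 n, F k (k+1) := by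
    rw [hP2, Finset.sum_image]
    · exact Finset.sum_congr rfl fun k _ => hsymm _ _
    · intro a _ b _ h; simpa using (Prod.ext_iff.mp h).2
  have hdisj : Disjoint P1 P2 := by
    rw [Finset.disjoint_left]
    rintro ⟨a, b⟩ h1 h2
    simp only [hP1, hP2, Finset.mem_image, mem_Icc] at h1 h2
    obtain ⟨k, _, hk⟩ := h1; obtain ⟨l, _, hl⟩ := h2
    obtain ⟨rfl, rfl⟩ := Prod.ext_iff.mp hk
    have := Prod.ext_iff.mp hl
    omega
  have hsub : P1 ∪ P2 ⊆ (Icc 1 (n+1)) ×ˢ (Icc 1 (n+1)) := by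
    intro p hp
    simp only [hP1, hP2, Finset.mem_union, Finset.mem_image, mem_Icc] at hp
    rcases hp with ⟨k, hk, rfl⟩ | ⟨k, hk, rfl⟩ <;> simp only [Finset.mem_product, mem_Icc] <;> omega
  calc 2 * ∑ k ∈ Icc 1 n, F k (k+1) = ∑ p ∈ P1, F p.1 p.2 + ∑ p ∈ P2, F p.1 p.2 := by
        rw [hs1, hs2]; ring
    _ = ∑ p ∈ P1 ∪ P2, F p.1 p.2 := (Finset.sum_union hdisj).symm
    _ ≤ ∑ p ∈ (Icc 1 (n+1)) ×ˢ (Icc 1 (n+1)), F p.1 p.2 := by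
        refine Finset.sum_le_sum_of_subset_of_nonneg hsub fun p hp _ => ?_
        rw [Finset.mem_product] at hp
        exact hF p.1 hp.1 p.2 hp.2
    _ = ∑ i ∈ Icc 1 (n+1), ∑ j ∈ Icc 1 (n+1), F i j := Finset.sum_product _ _ _

-- double sum factorization helper
theorem double_factor (s : Finset ℕ) (f g : ℕ → ℝ) (a : ℝ) :
    ∑ i ∈ s, ∑ j ∈ s, a * (f i * g j) = a * ((∑ i ∈ s, f i) * (∑ j ∈ s, g j)) := by
  rw [Finset.sum_mul_sum]
  rw [Finset.mul_sum]
  refine Finset.sum_congr rfl fun i _ => ?_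
  rw [Finset.mul_sum]

theorem bridge_aux
    (T : ℝ) (hT : 0 < T) (n : ℕ) (hn : 1 ≤ n)
    (t : ℕ → ℝ) (h0 : t 0 = 0) (hlast : t (n + 1) = T)
    (hmono : ∀ k ≤ n, t k < t (k + 1)) (c : ℕ → ℝ) :
    (1 / T) * ∑ k ∈ Finset.Icc 1 n,
        (t k - t (k - 1)) * (t (k + 1) - t k) * c k ^ 2
      ≤ ∑ i ∈ Finset.Icc 1 n, ∑ j ∈ Finset.Icc 1 n,
          (min (t i) (t j) - t i * t j / T) * c i * c j := by
  classical
  set d : ℕ → ℝ := fun k => t k - t (k-1) with hd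
  set A : ℕ → ℝ := fun k => ∑ i ∈ Icc k n, c i with hA
  set e : ℕ → ℕ → ℝ := fun k i => if k ≤ i then c i else 0 with he
  -- t m as partial sums of d
  have ht : ∀ m, t m = ∑ k ∈ Icc 1 m, d k := by
    intro m; rw [hd, telesc, h0]; ring
  -- monotonicity
  have tmono : ∀ a b, a ≤ b → b ≤ n+1 → t a ≤ t b := by
    intro a b hab hb
    induction b with
    | zero => have : a = 0 := Nat.le_zero.mp hab; simp [this]
    | succ m ih =>
      rcases Nat.lt_or_ge a (m+1) with h | h
      · exact le_trans (ih (by omega) (by omega)) (le_of_lt (hmono m (by omega)))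
      · have : a = m + 1 := by omega
        simp [this]
  have dpos : ∀ k ∈ Icc 1 (n+1), 0 < d k := by
    intro k hk; rw [mem_Icc] at hk
    have := hmono (k-1) (by omega)
    have hk1 : k - 1 + 1 = k := by omega
    rw [hk1] at this
    simpa [hd] using this
  -- B k = A k
  have hB : ∀ k ∈ Icc 1 (n+1), ∑ i ∈ Icc 1 n, e k i = A k := by
    intro k hk; rw [mem_Icc] at hk
    rw [he, hA]
    simp only []
    rw [← Finset.sum_filter]
    congr 1
    ext i; simp only [Finset.mem_filter, mem_Icc]; omega
  -- pointwise min expansion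
  have hmin : ∀ i ∈ Icc 1 n, ∀ j ∈ Icc 1 n,
      min (t i) (t j) * c i * c j = ∑ k ∈ Icc 1 (n+1), d k * (e k i * e k j) := by
    intro i hi j hj
    rw [mem_Icc] at hi hj
    have h1 : ∀ k ∈ Icc 1 (n+1), d k * (e k i * e k j)
        = if k ≤ i ∧ k ≤ j then d k * (c i * c j) else 0 := by
      intro k _
      simp only [he]
      by_cases hki : k ≤ i <;> by_cases hkj : k ≤ j <;>
        simp [hki, hkj] <;> ring
    rw [Finset.sum_congr rfl h1, ← Finset.sum_filter]
    have hfil : (Icc 1 (n+1)).filter (fun k => k ≤ i ∧ k ≤ j) = Icc 1 (min i j) := by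
      ext k; simp only [Finset.mem_filter, mem_Icc, le_min_iff]; omega
    rw [hfil, ← Finset.sum_mul (Icc 1 (min i j)) d (c i * c j)]
    have : ∑ k ∈ Icc 1 (min i j), d k = min (t i) (t j) := by
      rw [← ht]
      rcases le_total i j with h | h
      · rw [min_eq_left h, min_eq_left (tmono i j h (by omega))]
      · rw [min_eq_right h, min_eq_right (tmono j i h (by omega))]
    rw [this]; ring
  -- t i expansion
  have htexp : ∀ i ∈ Icc 1 n, t i * c i = ∑ k ∈ Icc 1 (n+1), d k * e k i := by
    intro i hi; rw [mem_Icc] at hi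
    have h1 : ∀ k ∈ Icc 1 (n+1), d k * e k i = if k ≤ i then d k * c i else 0 := by
      intro k _; rw [he]; simp only []
      split_ifs <;> ring
    rw [Finset.sum_congr rfl h1, ← Finset.sum_filter]
    have hfil : (Icc 1 (n+1)).filter (fun k => k ≤ i) = Icc 1 i := by
      ext k; simp only [Finset.mem_filter, mem_Icc]; omega
    rw [hfil, ← Finset.sum_mul, ← ht]
  -- step 1 : double min sum
  have step1 : ∑ i ∈ Icc 1 n, ∑ j ∈ Icc 1 n, min (t i) (t j) * c i * c j
      = ∑ k ∈ Icc 1 (n+1), d k * A k ^ 2 := by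
    have e1 : ∑ i ∈ Icc 1 n, ∑ j ∈ Icc 1 n, min (t i) (t j) * c i * c j
        = ∑ i ∈ Icc 1 n, ∑ j ∈ Icc 1 n, ∑ k ∈ Icc 1 (n+1), d k * (e k i * e k j) := by
      refine Finset.sum_congr rfl fun i hi => Finset.sum_congr rfl fun j hj => ?_
      exact hmin i hi j hj
    rw [e1]
    have e2 : ∑ i ∈ Icc 1 n, ∑ j ∈ Icc 1 n, ∑ k ∈ Icc 1 (n+1), d k * (e k i * e k j)
        = ∑ k ∈ Icc 1 (n+1), ∑ i ∈ Icc 1 n, ∑ j ∈ Icc 1 n, d k * (e k i * e k j) := by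
      rw [Finset.sum_congr rfl fun i _ => Finset.sum_comm, Finset.sum_comm]
    rw [e2]
    refine Finset.sum_congr rfl fun k hk => ?_
    rw [double_factor, hB k hk]
    ring
  -- step 2 : single t sum
  have step2 : ∑ i ∈ Icc 1 n, t i * c i = ∑ k ∈ Icc 1 (n+1), d k * A k := by
    rw [Finset.sum_congr rfl htexp, Finset.sum_comm]
    refine Finset.sum_congr rfl fun k hk => ?_
    rw [← Finset.mul_sum, hB k hk]
  -- split full LHS
  have split : ∑ i ∈ Icc 1 n, ∑ j ∈ Icc 1 n, (min (t i) (t j) - t i * t j / T) * c i * c j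
      = (∑ k ∈ Icc 1 (n+1), d k * A k ^ 2)
        - (1/T) * (∑ k ∈ Icc 1 (n+1), d k * A k) ^ 2 := by
    have e1 : ∀ i ∈ Icc 1 n, ∀ j ∈ Icc 1 n,
        (min (t i) (t j) - t i * t j / T) * c i * c j
          = min (t i) (t j) * c i * c j - (1/T) * ((t i * c i) * (t j * c j)) := by
      intro i _ j _; field_simp
    have e2 : ∑ i ∈ Icc 1 n, ∑ j ∈ Icc 1 n, (min (t i) (t j) - t i * t j / T) * c i * c j
        = (∑ i ∈ Icc 1 n, ∑ j ∈ Icc 1 n, min (t i) (t j) * c i * c j)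
          - ∑ i ∈ Icc 1 n, ∑ j ∈ Icc 1 n, (1/T) * ((t i * c i) * (t j * c j)) := by
      rw [← Finset.sum_sub_distrib]
      refine Finset.sum_congr rfl fun i hi => ?_
      rw [← Finset.sum_sub_distrib]
      exact Finset.sum_congr rfl fun j hj => e1 i hi j hj
    rw [e2, step1, double_factor, step2, ← step2]
    ring
  rw [split]
  -- total mass
  have hTsum : ∑ k ∈ Icc 1 (n+1), d k = T := by
    rw [hd, telesc, h0, hlast]; ring
  -- Lagrange + extraction
  have hlag := lagrange (Icc 1 (n+1)) d A
  rw [hTsum] at hlag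
  have hadj := adj_le n (fun i j => d i * d j * (A i - A j) ^ 2)
    (fun i hi j hj => mul_nonneg (mul_nonneg (dpos i hi).le (dpos j hj).le) (sq_nonneg _))
    (fun i j => by ring)
  -- A k - A (k+1) = c k
  have hAc : ∀ k ∈ Icc 1 n, A k - A (k+1) = c k := by
    intro k hk; rw [mem_Icc] at hk
    rw [hA]; simp only []
    have : Icc k n = (Ioc k n).cons k (by simp) := Finset.Icc_eq_cons_Ioc hk.2
    rw [this, Finset.sum_cons, ← Finset.Icc_add_one_left_eq_Ioc]
    ring
  have hterm : ∀ k ∈ Icc 1 n, d k * d (k+1) * (A k - A (k+1)) ^ 2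
      = (t k - t (k-1)) * (t (k+1) - t k) * c k ^ 2 := by
    intro k hk
    rw [hAc k hk, hd]
    simp only []
    norm_num
  have key : ∑ k ∈ Icc 1 n, (t k - t (k-1)) * (t (k+1) - t k) * c k ^ 2
      ≤ T * (∑ k ∈ Icc 1 (n+1), d k * A k ^ 2) - (∑ k ∈ Icc 1 (n+1), d k * A k) ^ 2 := by
    have h1 : ∑ k ∈ Icc 1 n, (t k - t (k-1)) * (t (k+1) - t k) * c k ^ 2
        = ∑ k ∈ Icc 1 n, d k * d (k+1) * (A k - A (k+1)) ^ 2 :=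
      (Finset.sum_congr rfl hterm).symm
    rw [h1]
    nlinarith [hadj, hlag]
  have h1T : (0:ℝ) < 1/T := by positivity
  calc (1/T) * ∑ k ∈ Icc 1 n, (t k - t (k-1)) * (t (k+1) - t k) * c k ^ 2
      ≤ (1/T) * (T * (∑ k ∈ Icc 1 (n+1), d k * A k ^ 2)
          - (∑ k ∈ Icc 1 (n+1), d k * A k) ^ 2) := by
        exact mul_le_mul_of_nonneg_left key (le_of_lt h1T)
    _ = (∑ k ∈ Icc 1 (n+1), d k * A k ^ 2) - (1/T) * (∑ k ∈ Icc 1 (n+1), d k * A k) ^ 2 := by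
        field_simp

/-- Ellipticity of the Brownian-bridge kernel `ξ_{ij} = min(t_i,t_j) − t_i t_j / T` on
`0 = t₀ < t₁ < ⋯ < tₙ < t_{n+1} = T`:
`Σ_{i,j} ξ_{ij} c_i c_j ≥ (1/T) Σ_k (t_k − t_{k−1})(t_{k+1} − t_k) c_k²`, and the matrix
`(ξ_{ij})` is positive definite. -/
theorem bridge_kernel_posdef
    (T : ℝ) (hT : 0 < T) (n : ℕ) (hn : 1 ≤ n)
    (t : ℕ → ℝ) (h0 : t 0 = 0) (hlast : t (n + 1) = T)
    (hmono : ∀ k ≤ n, t k < t (k + 1)) :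
    (∀ c : ℕ → ℝ,
      (1 / T) * ∑ k ∈ Finset.Icc 1 n,
          (t k - t (k - 1)) * (t (k + 1) - t k) * c k ^ 2
        ≤ ∑ i ∈ Finset.Icc 1 n, ∑ j ∈ Finset.Icc 1 n,
            (min (t i) (t j) - t i * t j / T) * c i * c j) ∧
    Matrix.PosDef (Matrix.of fun i j : Fin n =>
      min (t (i.val + 1)) (t (j.val + 1)) - t (i.val + 1) * t (j.val + 1) / T) := by
  classical
  refine ⟨fun c => bridge_aux T hT n hn t h0 hlast hmono c,
    Matrix.posDef_iff_dotProduct_mulVec.mpr ⟨?_, ?_⟩⟩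
  · -- Hermitian
    ext i j
    simp only [Matrix.conjTranspose_apply, Matrix.of_apply, star_trivial]
    rw [min_comm, mul_comm]
  · -- positivity
    intro x hx
    set c : ℕ → ℝ := fun m => if h : 1 ≤ m ∧ m ≤ n then x ⟨m-1, by omega⟩ else 0 with hc
    have hcc : ∀ i : Fin n, c (i.val + 1) = x i := by
      intro i
      have h : 1 ≤ i.val + 1 ∧ i.val + 1 ≤ n := ⟨by omega, i.isLt⟩
      simp only [hc]
      rw [dif_pos h]
      exact congrArg x (Fin.ext (by simp))
    have hreidx : ∀ f : ℕ → ℝ, ∑ m ∈ Icc 1 n, f m = ∑ i : Fin n, f (i.val + 1) := by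
      intro f
      rw [← Finset.Ico_add_one_right_eq_Icc, Finset.sum_Ico_eq_sum_range,
        Fin.sum_univ_eq_sum_range (fun i => f (i + 1)) n]
      refine Finset.sum_congr (by norm_num) fun i _ => by rw [Nat.add_comm]
    -- quadratic form equality
    have hquad : ∑ i ∈ Icc 1 n, ∑ j ∈ Icc 1 n,
          (min (t i) (t j) - t i * t j / T) * c i * c j
        = dotProduct (star x) (Matrix.mulVec (Matrix.of fun i j : Fin n =>
            min (t (i.val + 1)) (t (j.val + 1)) - t (i.val + 1) * t (j.val + 1) / T) x) := by
      rw [hreidx]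
      rw [Finset.sum_congr rfl (fun i (_ : i ∈ Finset.univ) => hreidx
        (fun j => (min (t (i.val+1)) (t j) - t (i.val+1) * t j / T) * c (i.val+1) * c j))]
      simp only [dotProduct, Matrix.mulVec, Matrix.of_apply, star_trivial, hcc]
      refine Finset.sum_congr rfl fun i _ => ?_
      rw [Finset.mul_sum]
      refine Finset.sum_congr rfl fun j _ => ?_
      ring
    rw [← hquad]
    -- lower bound
    have hlow := bridge_aux T hT n hn t h0 hlast hmono c
    refine lt_of_lt_of_le ?_ hlow
    have hpos : 0 < ∑ k ∈ Icc 1 n, (t k - t (k - 1)) * (t (k + 1) - t k) * c k ^ 2 := by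
      obtain ⟨i, hi⟩ := Function.ne_iff.mp hx
      have hnonneg : ∀ k ∈ Icc 1 n, 0 ≤ (t k - t (k - 1)) * (t (k + 1) - t k) * c k ^ 2 := by
        intro k hk; rw [mem_Icc] at hk
        have h1 : t (k-1) < t k := by
          have := hmono (k-1) (by omega)
          have hk1 : k - 1 + 1 = k := by omega
          rwa [hk1] at this
        have h2 : t k < t (k+1) := hmono k hk.2
        exact mul_nonneg (mul_nonneg (by linarith) (by linarith)) (sq_nonneg _)
      have hmem : i.val + 1 ∈ Icc 1 n := by rw [mem_Icc]; exact ⟨by omega, i.isLt⟩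
      refine Finset.sum_pos' hnonneg ⟨i.val + 1, hmem, ?_⟩
      have h1 : t (i.val + 1 - 1) < t (i.val + 1) := by
        have := hmono i.val (by omega)
        simpa using this
      have h2 : t (i.val + 1) < t (i.val + 1 + 1) := hmono (i.val + 1) (by omega)
      have h3 : c (i.val + 1) ≠ 0 := by rw [hcc]; simpa using hi
      have h4 : 0 < c (i.val + 1) ^ 2 := by positivity
      exact mul_pos (mul_pos (by linarith) (by linarith)) h4
    positivity
end

section
/- Let T > 0, n ≥ 1, 0 < t₁ < ⋯ < tₙ < T, and a₁, …, aₙ ∈ ℝ. If Σ_{i=1}^{n} a_i (t_i/T − 1_{[0,t_i]}(s)) = 0 for Lebesgue-almost every s ∈ [0,T], then a_i = 0 for every i ∈ {1,…,n}. -/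
open MeasureTheory Set

/-- The functions `s ↦ t_i/T − 1_{[0,t_i]}(s)`, for `0 < t₁ < ⋯ < tₙ < T`, are linearly
independent in `L²([0,T])`: if a linear combination vanishes a.e. on `[0,T]`, then all
coefficients vanish. -/
theorem linear_independence_bridge
    (T : ℝ) (hT : 0 < T) (n : ℕ) (hn : 1 ≤ n)
    (t : Fin n → ℝ) (hmono : StrictMono t) (hrange : ∀ i, t i ∈ Ioo (0:ℝ) T)
    (a : Fin n → ℝ)
    (h : ∀ᵐ s ∂(volume.restrict (Icc (0:ℝ) T)),
      ∑ i, a i * (t i / T - indicator (Icc (0:ℝ) (t i)) (fun _ => (1:ℝ)) s) = 0) :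
    ∀ i, a i = 0 := by
  classical
  set f : ℝ → ℝ := fun s => ∑ i, a i * (t i / T - indicator (Icc (0:ℝ) (t i)) (fun _ => (1:ℝ)) s) with hf
  have hmeasf : Measurable f := by
    apply Finset.measurable_sum
    intro i _
    exact (measurable_const.sub (measurable_const.indicator measurableSet_Icc)).const_mul _
  have hmeas : MeasurableSet {s : ℝ | ¬ f s = 0} :=
    (hmeasf (measurableSet_singleton 0)).compl
  have hN : volume ({s : ℝ | ¬ f s = 0} ∩ Icc 0 T) = 0 := by
    have h0 := ae_iff.mp h
    rwa [Measure.restrict_apply hmeas] at h0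
  have key : ∀ u v : ℝ, 0 ≤ u → v ≤ T → u < v → ∃ s, u < s ∧ s < v ∧ f s = 0 := by
    intro u v hu hv huv
    by_contra hcon
    push_neg at hcon
    have hsub : Ioo u v ⊆ {s : ℝ | ¬ f s = 0} ∩ Icc 0 T := by
      intro s hs
      exact ⟨hcon s hs.1 hs.2, ⟨le_of_lt (lt_of_le_of_lt hu hs.1), le_trans (le_of_lt hs.2) hv⟩⟩
    have hle := (measure_mono hsub).trans_eq hN
    rw [Real.volume_Ioo] at hle
    have hpos : (0:ℝ) < v - u := by linarith
    have := ENNReal.ofReal_pos.mpr hpos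
    exact absurd (le_antisymm hle zero_le) (ne_of_gt this)
  have E : ∀ k : ℕ, k ≤ n → (∑ i, a i * (t i / T)) = ∑ i : Fin n, if k ≤ (i : ℕ) then a i else 0 := by
    intro k hk
    set u : ℝ := if hk0 : k = 0 then (0:ℝ) else t ⟨k - 1, by omega⟩ with hu_def
    set v : ℝ := if hkn : k < n then t ⟨k, hkn⟩ else T with hv_def
    have hu0 : 0 ≤ u := by
      rw [hu_def]
      split
      · exact le_refl 0
      · exact (hrange _).1.le
    have hvT : v ≤ T := by
      rw [hv_def]
      split
      · exact (hrange _).2.le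
      · exact le_refl T
    have huv : u < v := by
      rw [hu_def, hv_def]
      split
      · split
        · exact (hrange _).1
        · omega
      · split
        · rename_i hk0 hkn
          exact hmono (by simp [Fin.lt_def]; omega)
        · rename_i hk0 hkn
          exact (hrange _).2
    have char : ∀ s, u < s → s < v → ∀ j : Fin n, (s ≤ t j ↔ k ≤ (j:ℕ)) := by
      intro s hus hsv j
      constructor
      · intro hsj
        by_contra hjk
        push_neg at hjk
        have hk0 : k ≠ 0 := by omega
        have hle : t j ≤ t ⟨k - 1, by omega⟩ := by
          apply hmono.monotone
          simp [Fin.le_def]; omega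
        have : u = t ⟨k - 1, by omega⟩ := by rw [hu_def]; simp [hk0]
        linarith [this ▸ hus]
      · intro hkj
        have hkn : k < n := lt_of_le_of_lt hkj j.isLt
        have hle : t ⟨k, hkn⟩ ≤ t j := by
          apply hmono.monotone
          simp [Fin.le_def]; omega
        have : v = t ⟨k, hkn⟩ := by rw [hv_def]; simp [hkn]
        linarith [this ▸ hsv]
    obtain ⟨s, hus, hsv, hfs⟩ := key u v hu0 hvT huv
    have hs0 : 0 < s := lt_of_le_of_lt hu0 hus
    have hcalc : f s = (∑ i, a i * (t i / T)) - ∑ i : Fin n, if k ≤ (i:ℕ) then a i else 0 := by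
      rw [hf]
      simp only
      rw [← Finset.sum_sub_distrib]
      apply Finset.sum_congr rfl
      intro i _
      rw [Set.indicator_apply]
      by_cases hsi : k ≤ (i:ℕ)
      · have hmem : s ∈ Icc (0:ℝ) (t i) := ⟨hs0.le, (char s hus hsv i).mpr hsi⟩
        simp only [if_pos hmem, if_pos hsi]
        ring
      · have hmem : s ∉ Icc (0:ℝ) (t i) := fun hm => hsi ((char s hus hsv i).mp hm.2)
        simp only [if_neg hmem, if_neg hsi]
        ring
    rw [hfs] at hcalc
    linarith
  intro i
  have h1 := E (i : ℕ) (le_of_lt i.isLt)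
  have h2 := E ((i : ℕ) + 1) i.isLt
  have h3 : (∑ j : Fin n, if (i:ℕ) ≤ (j:ℕ) then a j else 0) - (∑ j : Fin n, if (i:ℕ)+1 ≤ (j:ℕ) then a j else 0) = a i := by
    rw [← Finset.sum_sub_distrib]
    have hpt : ∀ j : Fin n, (if (i:ℕ) ≤ (j:ℕ) then a j else 0) - (if (i:ℕ)+1 ≤ (j:ℕ) then a j else 0) = if j = i then a j else 0 := by
      intro j
      by_cases hji : (j:ℕ) = (i:ℕ)
      · have hj : j = i := Fin.ext hji
        subst hj
        simp
      · have hne : j ≠ i := fun h' => hji (congrArg Fin.val h')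
        by_cases hc : (i:ℕ) ≤ (j:ℕ)
        · have hc2 : (i:ℕ)+1 ≤ (j:ℕ) := by omega
          simp [hc, hc2, hne]
        · have hc2 : ¬ ((i:ℕ)+1 ≤ (j:ℕ)) := by omega
          simp [hc, hc2, hne]
    rw [Finset.sum_congr rfl (fun j _ => hpt j), Finset.sum_ite_eq' Finset.univ i a]
    simp
  linarith
end

section
/- Let T > 0, α : [0,T] → ℝ be integrable, σ ∈ ℝ, x₀ ∈ ℝ, and 0 < t₁ < ⋯ < tₙ ≤ T. Let N_t = #{i : t_i ≤ t} and define S_t = x₀ · exp(∫₀ᵗ α(s) ds) · (1+σ)^{N_t} for t ∈ [0,T]. Then for every t ∈ [0,T]: S_t = x₀ + ∫₀ᵗ α(s) S_s ds + σ · Σ_{i : t_i ≤ t} x₀ · exp(∫₀^{t_i} α(s) ds) · (1+σ)^{i−1}, where x₀ · exp(∫₀^{t_i} α) · (1+σ)^{i−1} is the left limit S_{t_i−}. -/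
open MeasureTheory Set intervalIntegral

lemma fubini_step (α g : ℝ → ℝ) (a b : ℝ) (hab : a ≤ b)
    (hα : IntegrableOn α (Ioc a b)) (hg : IntegrableOn g (Ioc a b)) :
    ∫ s in Ioc a b, α s * (∫ u in Ioc a s, g u)
      = ∫ u in Ioc a b, g u * (∫ s in Ioc u b, α s) := by
  have hD : MeasurableSet {p : ℝ × ℝ | p.2 ≤ p.1} :=
    measurableSet_le measurable_snd measurable_fst
  have hbase : Integrable (fun p : ℝ × ℝ => α p.1 * g p.2)
      ((volume.restrict (Ioc a b)).prod (volume.restrict (Ioc a b))) :=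
    hα.mul_prod hg
  have hint : Integrable
      (Function.uncurry fun s u => {p : ℝ × ℝ | p.2 ≤ p.1}.indicator
        (fun p => α p.1 * g p.2) (s, u))
      ((volume.restrict (Ioc a b)).prod (volume.restrict (Ioc a b))) := by
    have h := hbase.indicator hD
    exact h
  have swap := integral_integral_swap hint
  have hL : ∫ s in Ioc a b,
      (∫ u in Ioc a b, {p : ℝ × ℝ | p.2 ≤ p.1}.indicator
        (fun p => α p.1 * g p.2) (s, u))
      = ∫ s in Ioc a b, α s * (∫ u in Ioc a s, g u) := by
    apply setIntegral_congr_fun measurableSet_Ioc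
    intro s hs
    dsimp only
    have h1 : (fun u => {p : ℝ × ℝ | p.2 ≤ p.1}.indicator
        (fun p => α p.1 * g p.2) (s, u))
        = fun u => (Iic s).indicator (fun u => α s * g u) u := by
      funext u
      simp [Set.indicator_apply]
    rw [h1, setIntegral_indicator measurableSet_Iic, Ioc_inter_Iic,
      min_eq_right hs.2, MeasureTheory.integral_const_mul]
  have hR : ∫ u in Ioc a b,
      (∫ s in Ioc a b, {p : ℝ × ℝ | p.2 ≤ p.1}.indicator
        (fun p => α p.1 * g p.2) (s, u))
      = ∫ u in Ioc a b, g u * (∫ s in Ioc u b, α s) := by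
    apply setIntegral_congr_fun measurableSet_Ioc
    intro u hu
    dsimp only
    have h1 : (fun s => {p : ℝ × ℝ | p.2 ≤ p.1}.indicator
        (fun p => α p.1 * g p.2) (s, u))
        = fun s => (Ici u).indicator (fun s => α s * g u) s := by
      funext s
      simp [Set.indicator_apply]
    have h2 : Ioc a b ∩ Ici u = Icc u b := by
      ext x
      simp only [mem_inter_iff, mem_Ioc, mem_Ici, mem_Icc]
      constructor
      · rintro ⟨⟨_, hx2⟩, hx3⟩; exact ⟨hx3, hx2⟩
      · rintro ⟨hx1, hx2⟩; exact ⟨⟨lt_of_lt_of_le hu.1 hx1, hx2⟩, hx1⟩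
    rw [h1, setIntegral_indicator measurableSet_Ici, h2,
      integral_Icc_eq_integral_Ioc, MeasureTheory.integral_mul_const]
    ring
  rw [← hL, ← hR]
  exact swap

lemma pow_primitive_integral (α : ℝ → ℝ) :
    ∀ (k : ℕ) (a b : ℝ), a ≤ b → IntervalIntegrable α volume a b →
      ∫ s in a..b, α s * (∫ t in a..s, α t) ^ k
        = (∫ t in a..b, α t) ^ (k + 1) / (k + 1) := by
  intro k
  induction k with
  | zero => intro a b hab hint; simp
  | succ k ih =>
    intro a b hab hint
    have hIcc : IntegrableOn α (Icc a b) := by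
      rw [integrableOn_Icc_iff_integrableOn_Ioc]
      exact (intervalIntegrable_iff_integrableOn_Ioc_of_le hab).mp hint
    have huIcc : uIcc a b = Icc a b := uIcc_of_le hab
    have hFc : ContinuousOn (fun s => ∫ t in a..s, α t) (Icc a b) := by
      have := continuousOn_primitive_interval (a := a) (b := b) (f := α) (μ := volume)
        (by rwa [huIcc])
      rwa [huIcc] at this
    set F : ℝ → ℝ := fun s => ∫ t in a..s, α t with hF
    have hsub : ∀ s ∈ Icc a b, IntervalIntegrable α volume a s := fun s hs =>
      hint.mono_set (by rw [huIcc, uIcc_of_le hs.1]; exact Icc_subset_Icc le_rfl hs.2)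
    have hgk : ∀ j : ℕ, IntervalIntegrable (fun s => α s * F s ^ j) volume a b := by
      intro j
      apply hint.mul_continuousOn
      rw [huIcc]; exact hFc.pow j
    have hIH : ∀ s ∈ Icc a b, ∫ u in a..s, α u * F u ^ k = F s ^ (k + 1) / (k + 1) :=
      fun s hs => ih a s hs.1 (hsub s hs)
    have hfub := fubini_step α (fun u => α u * F u ^ k) a b hab
      ((intervalIntegrable_iff_integrableOn_Ioc_of_le hab).mp hint)
      ((intervalIntegrable_iff_integrableOn_Ioc_of_le hab).mp (hgk k))
    have hLHS : ∫ s in Ioc a b, α s * (∫ u in Ioc a s, α u * F u ^ k)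
        = ∫ s in Ioc a b, (α s * F s ^ (k + 1)) / ((k : ℝ) + 1) := by
      apply setIntegral_congr_fun measurableSet_Ioc
      intro s hs
      dsimp only
      rw [← integral_of_le hs.1.le, hIH s ⟨hs.1.le, hs.2⟩]
      push_cast
      ring
    have hRHS : ∫ u in Ioc a b, (α u * F u ^ k) * (∫ s in Ioc u b, α s)
        = ∫ u in Ioc a b, (F b * (α u * F u ^ k) - α u * F u ^ (k + 1)) := by
      apply setIntegral_congr_fun measurableSet_Ioc
      intro u hu
      dsimp only
      rw [← integral_of_le hu.2]
      have : ∫ s in u..b, α s = F b - F u :=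
        (integral_interval_sub_left hint (hsub u ⟨hu.1.le, hu.2⟩)).symm
      rw [this]
      ring
    rw [hLHS, hRHS] at hfub
    have e1 : ∫ s in Ioc a b, (α s * F s ^ (k + 1)) / ((k : ℝ) + 1)
        = (∫ s in a..b, α s * F s ^ (k + 1)) / ((k : ℝ) + 1) := by
      rw [integral_of_le hab, MeasureTheory.integral_div]
    have e2 : ∫ u in Ioc a b, (F b * (α u * F u ^ k) - α u * F u ^ (k + 1))
        = F b * (F b ^ (k + 1) / ((k : ℝ) + 1)) - ∫ u in a..b, α u * F u ^ (k + 1) := by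
      rw [← integral_of_le hab, integral_sub ((hgk k).const_mul (F b)) (hgk (k + 1)),
        intervalIntegral.integral_const_mul, hIH b ⟨hab, le_rfl⟩]
    rw [e1, e2] at hfub
    have hc : ((k : ℝ) + 1) > 0 := by positivity
    have hc2 : ((k : ℝ) + 1 + 1) > 0 := by positivity
    set J := ∫ s in a..b, α s * F s ^ (k + 1) with hJ
    have : J * ((k : ℝ) + 1 + 1) = F b ^ (k + 1 + 1) := by
      have hpow : F b * F b ^ (k + 1) = F b ^ (k + 1 + 1) := by ring
      field_simp at hfub
      nlinarith [hfub]
    push_cast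
    rw [eq_div_iff (by positivity)]
    push_cast at this
    linarith [this]

lemma exp_primitive_integral (α : ℝ → ℝ) (a b : ℝ) (hab : a ≤ b)
    (hint : IntervalIntegrable α volume a b) :
    ∫ s in a..b, α s * Real.exp (∫ t in a..s, α t)
      = Real.exp (∫ t in a..b, α t) - 1 := by
  have huIcc : uIcc a b = Icc a b := uIcc_of_le hab
  have hIcc : IntegrableOn α (Icc a b) := by
    rw [integrableOn_Icc_iff_integrableOn_Ioc]
    exact (intervalIntegrable_iff_integrableOn_Ioc_of_le hab).mp hint
  have hFc : ContinuousOn (fun s => ∫ t in a..s, α t) (Icc a b) := by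
    have := continuousOn_primitive_interval (a := a) (b := b) (f := α) (μ := volume)
      (by rwa [huIcc])
    rwa [huIcc] at this
  set F : ℝ → ℝ := fun s => ∫ t in a..s, α t with hF
  obtain ⟨C, hC⟩ : ∃ C, ∀ s ∈ Icc a b, ‖F s‖ ≤ C :=
    isCompact_Icc.exists_bound_of_continuousOn hFc
  have hαIoc : IntegrableOn α (Ioc a b) :=
    (intervalIntegrable_iff_integrableOn_Ioc_of_le hab).mp hint
  have hgk : ∀ j : ℕ, IntervalIntegrable (fun s => α s * F s ^ j) volume a b := by
    intro j
    apply hint.mul_continuousOn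
    rw [huIcc]; exact hFc.pow j
  have hterm : ∀ k : ℕ, IntegrableOn (fun s => α s * F s ^ k / (k.factorial : ℝ)) (Ioc a b) volume :=
    fun k => (intervalIntegrable_iff_integrableOn_Ioc_of_le hab).mp ((hgk k).div_const _)
  have hnorm : ∀ k : ℕ, (∫ s in Ioc a b, ‖α s * F s ^ k / (k.factorial : ℝ)‖)
      ≤ (∫ s in Ioc a b, |α s|) * (C ^ k / (k.factorial : ℝ)) := by
    intro k
    have hbd : ∀ s ∈ Ioc a b, ‖α s * F s ^ k / (k.factorial : ℝ)‖ ≤ |α s| * (C ^ k / (k.factorial : ℝ)) := by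
      intro s hs
      have h1 : |F s| ^ k ≤ C ^ k :=
        pow_le_pow_left₀ (abs_nonneg _) (hC s ⟨hs.1.le, hs.2⟩) k
      have h2 : (0:ℝ) < (k.factorial : ℝ) := by positivity
      rw [Real.norm_eq_abs, abs_div, abs_mul, abs_pow, abs_of_pos h2]
      rw [div_le_iff₀ h2]
      have : |α s| * (C ^ k / ↑k.factorial) * ↑k.factorial = |α s| * C ^ k := by
        field_simp
      rw [this]
      exact mul_le_mul_of_nonneg_left h1 (abs_nonneg _)
    calc (∫ s in Ioc a b, ‖α s * F s ^ k / (k.factorial : ℝ)‖)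
        ≤ ∫ s in Ioc a b, |α s| * (C ^ k / (k.factorial : ℝ)) := by
          apply setIntegral_mono_on ((hterm k).norm) (hαIoc.abs.mul_const _)
            measurableSet_Ioc hbd
      _ = (∫ s in Ioc a b, |α s|) * (C ^ k / (k.factorial : ℝ)) := by
          rw [MeasureTheory.integral_mul_const]
  have hsummable : Summable (fun k : ℕ => ∫ s in Ioc a b, ‖α s * F s ^ k / (k.factorial : ℝ)‖) := by
    apply Summable.of_nonneg_of_le
      (fun k => integral_nonneg fun s => norm_nonneg _) hnorm
    exact (Real.summable_pow_div_factorial C).mul_left _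
  have hkey := MeasureTheory.integral_tsum_of_summable_integral_norm hterm hsummable
  have hpt : ∀ s : ℝ, (∑' k : ℕ, α s * F s ^ k / (k.factorial : ℝ)) = α s * Real.exp (F s) := by
    intro s
    have h1 : Real.exp (F s) = ∑' k : ℕ, F s ^ k / (k.factorial : ℝ) := by
      rw [Real.exp_eq_exp_ℝ, NormedSpace.exp_eq_tsum_div]
    rw [h1, ← tsum_mul_left]
    apply tsum_congr; intro k; ring
  have hval : ∀ k : ℕ, (∫ s in Ioc a b, α s * F s ^ k / (k.factorial : ℝ))
      = F b ^ (k + 1) / ((k + 1).factorial : ℝ) := by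
    intro k
    rw [← integral_of_le hab]
    have : ∫ s in a..b, α s * F s ^ k / (k.factorial : ℝ)
        = (∫ s in a..b, α s * F s ^ k) / (k.factorial : ℝ) := intervalIntegral.integral_div _ _
    rw [this, pow_primitive_integral α k a b hab hint]
    rw [Nat.factorial_succ]
    push_cast
    rw [div_div]
  have hsumb : Summable (fun k : ℕ => F b ^ k / (k.factorial : ℝ)) :=
    Real.summable_pow_div_factorial _
  have hfinal : (∑' k : ℕ, F b ^ (k + 1) / ((k + 1).factorial : ℝ)) = Real.exp (F b) - 1 := by
    have h1 : Real.exp (F b) = ∑' k : ℕ, F b ^ k / (k.factorial : ℝ) := by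
      rw [Real.exp_eq_exp_ℝ, NormedSpace.exp_eq_tsum_div]
    have h2 := Summable.tsum_eq_zero_add hsumb
    simp only [pow_zero, Nat.factorial_zero, Nat.cast_one, div_one] at h2
    rw [h1, h2]; ring
  rw [integral_of_le hab]
  calc ∫ s in Ioc a b, α s * Real.exp (F s)
      = ∫ s in Ioc a b, ∑' k : ℕ, α s * F s ^ k / (k.factorial : ℝ) := by
        apply setIntegral_congr_fun measurableSet_Ioc
        intro s _; exact (hpt s).symm
    _ = ∑' k : ℕ, ∫ s in Ioc a b, α s * F s ^ k / (k.factorial : ℝ) := hkey.symm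
    _ = ∑' k : ℕ, F b ^ (k + 1) / ((k + 1).factorial : ℝ) := tsum_congr hval
    _ = Real.exp (F b) - 1 := hfinal

lemma exp_primitive_integral' (α : ℝ → ℝ) (a b : ℝ) (ha : 0 ≤ a) (hab : a ≤ b)
    (hint : IntervalIntegrable α volume 0 b) :
    ∫ s in a..b, α s * Real.exp (∫ t in (0:ℝ)..s, α t)
      = Real.exp (∫ t in (0:ℝ)..b, α t) - Real.exp (∫ t in (0:ℝ)..a, α t) := by
  have h0b : (0:ℝ) ≤ b := le_trans ha hab
  have hsub : ∀ u v : ℝ, 0 ≤ u → u ≤ v → v ≤ b → IntervalIntegrable α volume u v := by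
    intro u v hu huv hvb
    apply hint.mono_set
    rw [uIcc_of_le huv, uIcc_of_le h0b]
    exact Icc_subset_Icc hu hvb
  have hsplit : ∀ s ∈ Icc a b, (∫ t in (0:ℝ)..s, α t)
      = (∫ t in (0:ℝ)..a, α t) + ∫ t in a..s, α t := fun s hs =>
    (integral_add_adjacent_intervals (hsub 0 a le_rfl ha hab)
      (hsub a s ha hs.1 hs.2)).symm
  calc ∫ s in a..b, α s * Real.exp (∫ t in (0:ℝ)..s, α t)
      = ∫ s in a..b, Real.exp (∫ t in (0:ℝ)..a, α t)
          * (α s * Real.exp (∫ t in a..s, α t)) := by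
        apply intervalIntegral.integral_congr
        intro s hs
        rw [uIcc_of_le hab] at hs
        dsimp only
        rw [hsplit s hs, Real.exp_add]
        ring
    _ = Real.exp (∫ t in (0:ℝ)..a, α t)
          * ∫ s in a..b, α s * Real.exp (∫ t in a..s, α t) :=
        intervalIntegral.integral_const_mul _ _
    _ = Real.exp (∫ t in (0:ℝ)..a, α t)
          * (Real.exp (∫ t in a..b, α t) - 1) := by
        rw [exp_primitive_integral α a b hab (hsub a b ha hab le_rfl)]
    _ = Real.exp (∫ t in (0:ℝ)..b, α t) - Real.exp (∫ t in (0:ℝ)..a, α t) := by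
        rw [hsplit b ⟨hab, le_rfl⟩, Real.exp_add]
        ring

lemma piece_integral (α : ℝ → ℝ) (c : ℝ) (S : ℝ → ℝ) (a b : ℝ) (h0 : 0 ≤ a) (hab : a ≤ b)
    (hint : IntervalIntegrable α volume 0 b)
    (hSeq : ∀ s, a ≤ s → s < b → S s = c * Real.exp (∫ t in (0:ℝ)..s, α t)) :
    IntervalIntegrable (fun s => α s * S s) volume a b ∧
      ∫ s in a..b, α s * S s
        = c * (Real.exp (∫ t in (0:ℝ)..b, α t) - Real.exp (∫ t in (0:ℝ)..a, α t)) := by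
  have h0b : (0:ℝ) ≤ b := le_trans h0 hab
  have hsub : ∀ u v : ℝ, 0 ≤ u → u ≤ v → v ≤ b → IntervalIntegrable α volume u v := by
    intro u v hu huv hvb
    apply hint.mono_set
    rw [uIcc_of_le huv, uIcc_of_le h0b]
    exact Icc_subset_Icc hu hvb
  have hαab : IntervalIntegrable α volume a b := hsub a b h0 hab le_rfl
  have huIcc : uIcc a b = Icc a b := uIcc_of_le hab
  -- continuity of the exponential factor on [a,b]
  have hprim : ContinuousOn (fun s => ∫ t in a..s, α t) (Icc a b) := by
    have hIcc : IntegrableOn α (Icc a b) := by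
      rw [integrableOn_Icc_iff_integrableOn_Ioc]
      exact (intervalIntegrable_iff_integrableOn_Ioc_of_le hab).mp hαab
    have := continuousOn_primitive_interval (a := a) (b := b) (f := α) (μ := volume)
      (by rwa [huIcc])
    rwa [huIcc] at this
  have hsplit : ∀ s ∈ Icc a b, (∫ t in (0:ℝ)..s, α t)
      = (∫ t in (0:ℝ)..a, α t) + ∫ t in a..s, α t := fun s hs =>
    (integral_add_adjacent_intervals (hsub 0 a le_rfl h0 hab)
      (hsub a s h0 hs.1 hs.2)).symm
  have hEc : ContinuousOn (fun s => Real.exp (∫ t in (0:ℝ)..s, α t)) (Icc a b) := by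
    have hG : ContinuousOn
        (fun s => Real.exp ((∫ t in (0:ℝ)..a, α t) + ∫ t in a..s, α t)) (Icc a b) :=
      Real.continuous_exp.comp_continuousOn (continuousOn_const.add hprim)
    apply hG.congr
    intro s hs
    dsimp only
    rw [hsplit s hs]
  have hbase : IntervalIntegrable
      (fun s => c * (α s * Real.exp (∫ t in (0:ℝ)..s, α t))) volume a b := by
    apply IntervalIntegrable.const_mul
    apply hαab.mul_continuousOn
    rwa [huIcc]
  have hb_ne : ∀ᵐ x : ℝ ∂volume, x ≠ b := by
    rw [ae_iff]
    have : {x : ℝ | ¬x ≠ b} = {b} := by ext x; simp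
    rw [this]
    exact measure_singleton b
  have hSax : ∀ x, x ∈ uIoc a b → x ≠ b →
      α x * S x = c * (α x * Real.exp (∫ t in (0:ℝ)..x, α t)) := by
    intro x hx hxb
    rw [uIoc_of_le hab] at hx
    rw [hSeq x hx.1.le (lt_of_le_of_ne hx.2 hxb)]
    ring
  constructor
  · rw [intervalIntegrable_iff] at hbase ⊢
    apply hbase.congr
    rw [Filter.EventuallyEq, ae_restrict_iff' measurableSet_uIoc]
    filter_upwards [hb_ne] with x hxb hx
    exact (hSax x hx hxb).symm
  · have : ∫ s in a..b, α s * S s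
        = ∫ s in a..b, c * (α s * Real.exp (∫ t in (0:ℝ)..s, α t)) := by
      apply intervalIntegral.integral_congr_ae
      filter_upwards [hb_ne] with x hxb hx
      exact hSax x hx hxb
    rw [this, intervalIntegral.integral_const_mul,
      exp_primitive_integral' α a b h0 hab hint]

lemma telescope_aux (x₀ σ : ℝ) (f : ℕ → ℝ) (hf0 : f 0 = 1) :
    ∀ m : ℕ,
      x₀ + (∑ k ∈ Finset.range (m + 1), x₀ * (1 + σ) ^ k * (f (k + 1) - f k))
        + σ * ∑ i ∈ Finset.Icc 1 m, x₀ * f i * (1 + σ) ^ (i - 1)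
      = x₀ * f (m + 1) * (1 + σ) ^ m := by
  intro m
  induction m with
  | zero => simp [hf0]; ring
  | succ m ih =>
    rw [Finset.sum_range_succ, Finset.sum_Icc_succ_top (Nat.le_add_left 1 m)]
    simp only [Nat.add_sub_cancel]
    linear_combination ih

lemma filter_eq_Icc (n : ℕ) (tj : ℕ → ℝ)
    (hmono : ∀ i j, 1 ≤ i → i ≤ j → j ≤ n → tj i ≤ tj j) (r : ℝ) :
    (Finset.Icc 1 n).filter (fun i => tj i ≤ r)
      = Finset.Icc 1 ((Finset.Icc 1 n).filter (fun i => tj i ≤ r)).card := by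
  set P := (Finset.Icc 1 n).filter (fun i => tj i ≤ r) with hP
  rcases P.eq_empty_or_nonempty with hE | hNE
  · simp [hE]
  · have hMmem : P.max' hNE ∈ P := P.max'_mem hNE
    have hkey : P = Finset.Icc 1 (P.max' hNE) := by
      apply Finset.ext
      intro i
      simp only [hP, Finset.mem_filter, Finset.mem_Icc]
      constructor
      · intro ⟨⟨hi1, _⟩, _⟩
        refine ⟨hi1, ?_⟩
        exact P.le_max' i (by simp only [hP, Finset.mem_filter, Finset.mem_Icc]; tauto)
      · intro ⟨hi1, hiM⟩
        obtain ⟨⟨hM1, hMn⟩, hMr⟩ := Finset.mem_filter.mp hMmem |>.imp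
          (fun h => Finset.mem_Icc.mp h) id
        exact ⟨⟨hi1, le_trans hiM hMn⟩, le_trans (hmono i _ hi1 hiM hMn) hMr⟩
    have hcard : P.card = P.max' hNE := by
      conv_lhs => rw [hkey]
      rw [Nat.card_Icc]
      omega
    calc P = Finset.Icc 1 (P.max' hNE) := hkey
      _ = Finset.Icc 1 P.card := by rw [hcard]

/-- Pathwise solution of the linear jump equation `dS_t = α_t S_t dt + σ S_{t−} dN_t`,
`S₀ = x₀`, when the jump times are exactly `0 < t₁ < ⋯ < tₙ ≤ T`: the function
`S_t = x₀ exp(∫₀ᵗ α)(1+σ)^{N_t}` satisfies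
`S_t = x₀ + ∫₀ᵗ α_s S_s ds + σ Σ_{i : t_i ≤ t} x₀ exp(∫₀^{t_i} α)(1+σ)^{i−1}`. -/
theorem linear_jump_sde_solution
    (T : ℝ) (hT : 0 < T) (α : ℝ → ℝ)
    (hα : IntervalIntegrable α volume 0 T)
    (σ x₀ : ℝ) (n : ℕ) (hn : 1 ≤ n) (tj : ℕ → ℝ) (h1 : 0 < tj 1)
    (hmono : ∀ i, 1 ≤ i → i < n → tj i < tj (i + 1)) (htn : tj n ≤ T)
    (N : ℝ → ℕ)
    (hN : ∀ r, N r = ((Finset.Icc 1 n).filter (fun i => tj i ≤ r)).card)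
    (S : ℝ → ℝ)
    (hS : ∀ r, S r = x₀ * Real.exp (∫ s in (0:ℝ)..r, α s) * (1 + σ) ^ (N r)) :
    ∀ r ∈ Icc (0:ℝ) T,
      S r = x₀ + (∫ s in (0:ℝ)..r, α s * S s) +
        σ * ∑ i ∈ (Finset.Icc 1 n).filter (fun i => tj i ≤ r),
          x₀ * Real.exp (∫ s in (0:ℝ)..tj i, α s) * (1 + σ) ^ (i - 1) := by
  -- monotonicity facts
  have hmono2 : ∀ i j, 1 ≤ i → i ≤ j → j ≤ n → tj i ≤ tj j := by
    intro i j h1i hij hjn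
    revert hjn
    induction j, hij using Nat.le_induction with
    | base => intro _; exact le_rfl
    | succ j hj ih =>
      intro hjn
      exact le_trans (ih (by omega)) (hmono j (by omega) (by omega)).le
  have hstrict : ∀ i j, 1 ≤ i → i < j → j ≤ n → tj i < tj j := by
    intro i j h1i hij hjn
    obtain ⟨j', rfl⟩ : ∃ j', j = j' + 1 := ⟨j - 1, by omega⟩
    exact lt_of_le_of_lt (hmono2 i j' h1i (by omega) (by omega))
      (hmono j' (by omega) (by omega))
  have hpos : ∀ i, 1 ≤ i → i ≤ n → 0 < tj i := fun i h1i hin =>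
    lt_of_lt_of_le h1 (hmono2 1 i le_rfl h1i hin)
  intro r hr
  obtain ⟨hr0, hrT⟩ := hr
  set P := (Finset.Icc 1 n).filter (fun i => tj i ≤ r) with hPdef
  set m := P.card with hmdef
  have hPIcc : P = Finset.Icc 1 m := filter_eq_Icc n tj hmono2 r
  have hmn : m ≤ n := by
    have := Finset.card_filter_le (Finset.Icc 1 n) (fun i => tj i ≤ r)
    simpa [hmdef, hPdef] using this
  have h_le_r : ∀ i, 1 ≤ i → i ≤ m → tj i ≤ r := by
    intro i h1i him
    have : i ∈ P := hPIcc ▸ Finset.mem_Icc.mpr ⟨h1i, him⟩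
    exact (Finset.mem_filter.mp this).2
  have h_gt_r : ∀ i, m < i → i ≤ n → r < tj i := by
    intro i hmi hin
    by_contra h
    push_neg at h
    have : i ∈ P := Finset.mem_filter.mpr ⟨Finset.mem_Icc.mpr ⟨by omega, hin⟩, h⟩
    rw [hPIcc, Finset.mem_Icc] at this
    omega
  set a : ℕ → ℝ := fun k => if k = 0 then 0 else if k ≤ m then tj k else r with hadef
  have ha0 : a 0 = 0 := by simp [hadef]
  have hak : ∀ k, 1 ≤ k → k ≤ m → a k = tj k := by
    intro k h1k hkm
    simp only [hadef]
    rw [if_neg (by omega), if_pos hkm]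
  have har : ∀ k, m < k → a k = r := by
    intro k hmk
    simp only [hadef]
    rw [if_neg (by omega), if_neg (by omega)]
  have hbound : ∀ k, 0 ≤ a k ∧ a k ≤ r := by
    intro k
    rcases Nat.eq_zero_or_pos k with rfl | h1k
    · rw [ha0]; exact ⟨le_rfl, hr0⟩
    · by_cases hkm : k ≤ m
      · rw [hak k h1k hkm]
        exact ⟨(hpos k h1k (le_trans hkm hmn)).le, h_le_r k h1k hkm⟩
      · rw [har k (by omega)]; exact ⟨hr0, le_rfl⟩
  have hmono_a : ∀ k, a k ≤ a (k + 1) := by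
    intro k
    rcases Nat.eq_zero_or_pos k with rfl | h1k
    · rw [ha0]; exact (hbound 1).1
    · by_cases h2 : k + 1 ≤ m
      · rw [hak k h1k (by omega), hak (k + 1) (by omega) h2]
        exact (hstrict k (k + 1) h1k (Nat.lt_succ_self k) (le_trans h2 hmn)).le
      · by_cases h3 : k ≤ m
        · rw [hak k h1k h3, har (k + 1) (by omega)]
          exact h_le_r k h1k h3
        · rw [har k (by omega), har (k + 1) (by omega)]
  have hint_to : ∀ x : ℝ, 0 ≤ x → x ≤ T → IntervalIntegrable α volume 0 x := by
    intro x hx hxT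
    apply hα.mono_set
    rw [uIcc_of_le hx, uIcc_of_le hT.le]
    exact Icc_subset_Icc le_rfl hxT
  -- value of N on each piece
  have hNk : ∀ k, k ≤ m → ∀ s, a k ≤ s → s < a (k + 1) → N s = k := by
    intro k hkm s hs1 hs2
    rw [hN s]
    have hiff : ∀ i, 1 ≤ i → i ≤ n → (tj i ≤ s ↔ i ≤ k) := by
      intro i h1i hin
      constructor
      · intro hts
        by_contra hik
        push_neg at hik
        by_cases hk1m : k + 1 ≤ m
        · have he : a (k + 1) = tj (k + 1) := hak _ (by omega) hk1m
          have hle : tj (k + 1) ≤ tj i := hmono2 (k + 1) i (by omega) hik hin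
          rw [he] at hs2
          linarith
        · have hkm' : k = m := by omega
          have he : a (k + 1) = r := har _ (by omega)
          have := h_gt_r i (by omega) hin
          rw [he] at hs2
          linarith
      · intro hik
        have hk1 : 1 ≤ k := le_trans h1i hik
        have h5 := hmono2 i k h1i hik (le_trans hkm hmn)
        have h6 := hak k hk1 hkm
        rw [h6] at hs1
        linarith
    have hset : (Finset.Icc 1 n).filter (fun i => tj i ≤ s) = Finset.Icc 1 k := by
      apply Finset.ext
      intro i
      simp only [Finset.mem_filter, Finset.mem_Icc]
      constructor
      · rintro ⟨⟨hi1, hin⟩, hts⟩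
        exact ⟨hi1, (hiff i hi1 hin).mp hts⟩
      · rintro ⟨hi1, hik⟩
        have hin : i ≤ n := le_trans hik (le_trans hkm hmn)
        exact ⟨⟨hi1, hin⟩, (hiff i hi1 hin).mpr hik⟩
    rw [hset, Nat.card_Icc]
    omega
  -- pieces
  have hpiece : ∀ k, k ≤ m →
      IntervalIntegrable (fun s => α s * S s) volume (a k) (a (k + 1)) ∧
      ∫ s in a k..a (k + 1), α s * S s
        = x₀ * (1 + σ) ^ k * (Real.exp (∫ t in (0:ℝ)..a (k + 1), α t)
            - Real.exp (∫ t in (0:ℝ)..a k, α t)) := by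
    intro k hkm
    exact piece_integral α (x₀ * (1 + σ) ^ k) S (a k) (a (k + 1)) (hbound k).1 (hmono_a k)
      (hint_to (a (k + 1)) (hbound _).1 (le_trans (hbound _).2 hrT))
      (fun s hs1 hs2 => by rw [hS s, hNk k hkm s hs1 hs2]; ring)
  set f : ℕ → ℝ := fun k => Real.exp (∫ t in (0:ℝ)..a k, α t) with hfdef
  have hf0 : f 0 = 1 := by
    simp [hfdef, ha0]
  have har1 : a (m + 1) = r := har _ (Nat.lt_succ_self m)
  have hintsum : ∫ s in (0:ℝ)..r, α s * S s
      = ∑ k ∈ Finset.range (m + 1), x₀ * (1 + σ) ^ k * (f (k + 1) - f k) := by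
    calc ∫ s in (0:ℝ)..r, α s * S s
        = ∫ s in (a 0)..(a (m + 1)), α s * S s := by rw [ha0, har1]
      _ = ∑ k ∈ Finset.range (m + 1), ∫ s in (a k)..(a (k + 1)), α s * S s :=
          (intervalIntegral.sum_integral_adjacent_intervals (a := a) (n := m + 1)
            (fun k hk => (hpiece k (by omega)).1)).symm
      _ = ∑ k ∈ Finset.range (m + 1), x₀ * (1 + σ) ^ k * (f (k + 1) - f k) := by
          apply Finset.sum_congr rfl
          intro k hk
          have hk' : k ≤ m := by
            have := Finset.mem_range.mp hk
            omega
          exact (hpiece k hk').2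
  have hNr : N r = m := by rw [hN r]
  have hsum2 : ∑ i ∈ P, x₀ * Real.exp (∫ s in (0:ℝ)..tj i, α s) * (1 + σ) ^ (i - 1)
      = ∑ i ∈ Finset.Icc 1 m, x₀ * f i * (1 + σ) ^ (i - 1) := by
    rw [hPIcc]
    apply Finset.sum_congr rfl
    intro i hi
    obtain ⟨hi1, him⟩ := Finset.mem_Icc.mp hi
    rw [hfdef]
    dsimp only
    rw [hak i hi1 him]
  have hfr : Real.exp (∫ s in (0:ℝ)..r, α s) = f (m + 1) := by
    rw [hfdef]
    dsimp only
    rw [har1]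
  rw [hS r, hNr, hintsum, hsum2, hfr]
  exact (telescope_aux x₀ σ f hf0 m).symm
end

section
/- Let d ≥ 1, T > 0, let A, M be d×d real matrices with AM = MA, and let 0 < t₁ < ⋯ < tₙ ≤ T. Let N_t = #{i : t_i ≤ t} and define K_t = exp(tA) · (I + M)^{N_t} for t ∈ [0,T]. Then for every t ∈ [0,T]: K_t = I + ∫₀ᵗ A K_s ds + Σ_{i : t_i ≤ t} M · exp(t_i A) · (I+M)^{i−1}, where exp(t_i A) · (I+M)^{i−1} is the left limit K_{t_i−}. -/
open MeasureTheory Set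

section LinftyHelpers

attribute [local instance] Matrix.linftyOpNormedRing Matrix.linftyOpNormedAlgebra

lemma matrix_exp_commute_aux (d : ℕ) (A M : Matrix (Fin d) (Fin d) ℝ)
    (hAM : A * M = M * A) (t : ℝ) :
    M * NormedSpace.exp (t • A) = NormedSpace.exp (t • A) * M := by
  have h : Commute M A := hAM.symm
  exact (h.smul_right t).exp_right

lemma matrix_exp_entry_hasDerivAt (d : ℕ) (A C : Matrix (Fin d) (Fin d) ℝ) (t : ℝ)
    (i j : Fin d) :
    HasDerivAt (fun u : ℝ => (NormedSpace.exp (u • A) * C) i j)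
      ((NormedSpace.exp (t • A) * A * C) i j) t := by
  have h := (hasDerivAt_exp_smul_const (𝕂 := ℝ) A t).mul_const C
  let l : Matrix (Fin d) (Fin d) ℝ →ₗ[ℝ] ℝ :=
    { toFun := fun X => X i j, map_add' := by intros; rfl, map_smul' := by intros; rfl }
  exact (LinearMap.toContinuousLinearMap l).hasFDerivAt.comp_hasDerivAt t h

lemma matrix_exp_entry_continuous (d : ℕ) (A B C : Matrix (Fin d) (Fin d) ℝ) (i j : Fin d) :
    Continuous (fun u : ℝ => (B * (NormedSpace.exp (u • A) * C)) i j) := by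
  let l : Matrix (Fin d) (Fin d) ℝ →ₗ[ℝ] ℝ :=
    { toFun := fun X => X i j, map_add' := by intros; rfl, map_smul' := by intros; rfl }
  exact (LinearMap.toContinuousLinearMap l).continuous.comp
    (continuous_const.mul
      ((NormedSpace.exp_continuous.comp (continuous_id.smul continuous_const)).mul
        continuous_const))

end LinftyHelpers

attribute [local instance] Matrix.normedAddCommGroup Matrix.normedSpace

/-- Pathwise solution of the linear matrix jump equation
`dK_t = A K_t dt + M K_{t−} dN_t`, `K₀ = I`, with commuting matrices `AM = MA` and jump
times `0 < t₁ < ⋯ < tₙ ≤ T`: the function `K_t = exp(tA)(I+M)^{N_t}` satisfies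
`K_t = I + ∫₀ᵗ A K_s ds + Σ_{i : t_i ≤ t} M·exp(t_i A)(I+M)^{i−1}`. -/
theorem matrix_linear_jump_solution
    (d : ℕ) (hd : 1 ≤ d) (T : ℝ) (hT : 0 < T)
    (A M : Matrix (Fin d) (Fin d) ℝ) (hAM : A * M = M * A)
    (n : ℕ) (hn : 1 ≤ n) (tj : ℕ → ℝ) (h1 : 0 < tj 1)
    (hmono : ∀ i, 1 ≤ i → i < n → tj i < tj (i + 1)) (htn : tj n ≤ T)
    (N : ℝ → ℕ)
    (hN : ∀ r, N r = ((Finset.Icc 1 n).filter (fun i => tj i ≤ r)).card)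
    (K : ℝ → Matrix (Fin d) (Fin d) ℝ)
    (hK : ∀ r, K r = NormedSpace.exp (r • A) * (1 + M) ^ (N r)) :
    ∀ r ∈ Icc (0:ℝ) T,
      K r = 1 + (∫ s in (0:ℝ)..r, A * K s) +
        ∑ i ∈ (Finset.Icc 1 n).filter (fun i => tj i ≤ r),
          M * (NormedSpace.exp (tj i • A) * (1 + M) ^ (i - 1)) := by
  intro r hr
  obtain ⟨hr0, hrT⟩ := hr
  set E : ℝ → Matrix (Fin d) (Fin d) ℝ := fun t => NormedSpace.exp (t • A) with hE
  set P : Matrix (Fin d) (Fin d) ℝ := 1 + M with hP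
  -- commutation facts
  have hAE : ∀ t : ℝ, A * E t = E t * A := fun t =>
    matrix_exp_commute_aux d A A rfl t
  have hME : ∀ t : ℝ, M * E t = E t * M := fun t =>
    matrix_exp_commute_aux d A M hAM t
  have hPE : ∀ t : ℝ, P * E t = E t * P := by
    intro t
    simp only [hP, add_mul, mul_add, one_mul, mul_one, hME t]
  -- monotonicity of jump times
  have hmono' : ∀ i j, 1 ≤ i → i ≤ j → j ≤ n → tj i ≤ tj j := by
    intro i j hi hij
    induction j with
    | zero => omega
    | succ k ih =>
      intro hk
      rcases Nat.lt_succ_iff_lt_or_eq.1 (Nat.lt_succ_of_le hij) with h | h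
      · exact le_trans (ih (by omega) (by omega))
          (le_of_lt (hmono k (by omega) (by omega)))
      · exact le_of_eq (congrArg tj h)
  -- structure of the filter set
  have hfilter : ∀ s : ℝ,
      (Finset.Icc 1 n).filter (fun i => tj i ≤ s) = Finset.Icc 1 (N s) := by
    intro s
    set F := (Finset.Icc 1 n).filter (fun i => tj i ≤ s) with hF
    have hsubn : ∀ j ∈ F, 1 ≤ j ∧ j ≤ n ∧ tj j ≤ s := by
      intro j hj
      simp only [hF, Finset.mem_filter, Finset.mem_Icc] at hj
      exact ⟨hj.1.1, hj.1.2, hj.2⟩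
    have hdc : ∀ j ∈ F, ∀ i, 1 ≤ i → i ≤ j → i ∈ F := by
      intro j hj i hi hij
      obtain ⟨hj1, hjn, hjs⟩ := hsubn j hj
      simp only [hF, Finset.mem_filter, Finset.mem_Icc]
      exact ⟨⟨hi, le_trans hij hjn⟩, le_trans (hmono' i j hi hij hjn) hjs⟩
    have hNs : N s = F.card := hN s
    rw [hNs]
    refine (Finset.eq_of_subset_of_card_le ?_ ?_).symm
    · intro i hi
      simp only [Finset.mem_Icc] at hi
      by_contra hiF
      have hsub : F ⊆ Finset.Ico 1 i := by
        intro j hj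
        obtain ⟨hj1, hjn, hjs⟩ := hsubn j hj
        simp only [Finset.mem_Ico]
        refine ⟨hj1, ?_⟩
        by_contra hji
        exact hiF (hdc j hj i hi.1 (by omega))
      have := Finset.card_le_card hsub
      simp only [Nat.card_Ico] at this
      omega
    · simp [Nat.card_Icc]
  have hNmono : Monotone N := by
    intro s s' hss
    rw [hN, hN]
    refine Finset.card_le_card ?_
    intro i hi
    simp only [Finset.mem_filter] at hi ⊢
    exact ⟨hi.1, le_trans hi.2 hss⟩
  have hNn : ∀ s, N s ≤ n := by
    intro s
    rw [hN]
    calc ((Finset.Icc 1 n).filter (fun i => tj i ≤ s)).card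
        ≤ (Finset.Icc 1 n).card := Finset.card_le_card (Finset.filter_subset _ _)
      _ = n := by simp [Nat.card_Icc]
  set m := N r with hm
  have hmn : m ≤ n := hNn r
  have htm_r : ∀ j, 1 ≤ j → j ≤ m → tj j ≤ r := by
    intro j hj1 hjm
    have : j ∈ (Finset.Icc 1 n).filter (fun i => tj i ≤ r) := by
      rw [hfilter r]
      simp only [Finset.mem_Icc]
      exact ⟨hj1, hjm⟩
    simp only [Finset.mem_filter] at this
    exact this.2
  -- the partition points
  set u : ℕ → ℝ := fun j => if j = 0 then 0 else if j ≤ m then tj j else r with hu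
  have hu0 : u 0 = 0 := by simp [hu]
  have huj : ∀ j, 1 ≤ j → j ≤ m → u j = tj j := by
    intro j h1j hjm
    have hj0 : j ≠ 0 := by omega
    simp [hu, hj0, hjm]
  have hulast : u (m + 1) = r := by
    simp [hu]
  have hu_le : ∀ j, j ≤ m → u j ≤ u (j + 1) := by
    intro j hj
    rcases Nat.eq_zero_or_pos j with h0 | h0
    · subst h0
      rw [hu0]
      rcases Nat.eq_zero_or_pos m with hm0 | hm0
      · have : u 1 = r := by simp [hu]; omega
        rw [this]; exact hr0
      · rw [huj 1 le_rfl hm0]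
        exact le_of_lt h1
    · rcases Nat.lt_or_ge j m with hlt | hge
      · rw [huj j h0 hj, huj (j + 1) (by omega) (by omega)]
        exact le_of_lt (hmono j h0 (by omega))
      · have hjm : j = m := by omega
        rw [huj j h0 (by omega), (by omega : j + 1 = m + 1), hulast]
        exact htm_r j h0 (by omega)
  -- N is constant on the partition intervals
  have hNu : ∀ j, j ≤ m → ∀ s ∈ Ico (u j) (u (j + 1)), N s = j := by
    intro j hj s hs
    obtain ⟨hsl, hsr⟩ := hs
    have hs0 : 0 ≤ s := by
      rcases Nat.eq_zero_or_pos j with h0 | h0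
      · rw [← hu0]; subst h0; exact hsl
      · exact le_trans (le_of_lt (lt_of_lt_of_le h1 (hmono' 1 j le_rfl h0 (by omega))))
          (by rw [← huj j h0 hj]; exact hsl)
    have hge : j ≤ N s := by
      rcases Nat.eq_zero_or_pos j with h0 | h0
      · omega
      · have : Finset.Icc 1 j ⊆ (Finset.Icc 1 n).filter (fun i => tj i ≤ s) := by
          intro i hi
          simp only [Finset.mem_Icc] at hi
          simp only [Finset.mem_filter, Finset.mem_Icc]
          refine ⟨⟨hi.1, by omega⟩, ?_⟩
          calc tj i ≤ tj j := hmono' i j hi.1 hi.2 (by omega)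
            _ = u j := (huj j h0 hj).symm
            _ ≤ s := hsl
        have := Finset.card_le_card this
        rw [← hN s] at this
        simpa [Nat.card_Icc] using this
    have hle : N s ≤ j := by
      rcases Nat.lt_or_ge j m with hlt | hgem
      · by_contra hcon
        have hj1 : j + 1 ∈ Finset.Icc 1 (N s) := by
          simp only [Finset.mem_Icc]; omega
        rw [← hfilter s] at hj1
        simp only [Finset.mem_filter] at hj1
        have : u (j + 1) = tj (j + 1) := huj (j + 1) (by omega) (by omega)
        rw [this] at hsr
        linarith [hj1.2]
      · have hjm : j = m := by omega
        have : s ≤ r := by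
          rw [← hulast]
          calc s ≤ u (j + 1) := le_of_lt hsr
            _ = u (m + 1) := by rw [hjm]
        rw [hjm]
        exact hNmono this
    omega
  -- key integration lemma on a single interval
  have key : ∀ (a b : ℝ) (k : ℕ), a ≤ b → (∀ s ∈ Ico a b, N s = k) →
      @IntervalIntegrable _ (Matrix.normedAddCommGroup).toUniformSpace.toTopologicalSpace inferInstance (fun s => A * K s) volume a b ∧
      (∫ s in a..b, A * K s) = E b * P ^ k - E a * P ^ k := by
    intro a b k hab hNk
    set g : ℝ → Matrix (Fin d) (Fin d) ℝ := fun s => A * (E s * P ^ k) with hg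
    have hg_cont : Continuous g := by
      exact continuous_pi fun i => continuous_pi fun j =>
        matrix_exp_entry_continuous d A A (P ^ k) i j
    have hne : ∀ᵐ s : ℝ, s ≠ b :=
      Filter.Eventually.mono (compl_mem_ae_iff.2 (measure_singleton b))
        (fun x hx => hx)
    have heq : ∀ s ∈ Ico a b, A * K s = g s := by
      intro s hs
      rw [hK s, hNk s hs]
    -- integrability
    have hint : @IntervalIntegrable _ (Matrix.normedAddCommGroup).toUniformSpace.toTopologicalSpace inferInstance (fun s => A * K s) volume a b := by
      rw [intervalIntegrable_iff]
      have hgint : @IntegrableOn ℝ _ _ (Matrix.normedAddCommGroup).toUniformSpace.toTopologicalSpace inferInstance g (Set.uIoc a b) volume :=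
        intervalIntegrable_iff.1 (hg_cont.intervalIntegrable a b)
      refine hgint.congr_fun_ae ?_ |>.mono_set (subset_refl _)
      · filter_upwards [ae_restrict_of_ae hne, ae_restrict_mem measurableSet_uIoc]
          with s hsne hsmem
        rw [uIoc_of_le hab] at hsmem
        exact (heq s ⟨le_of_lt hsmem.1, lt_of_le_of_ne hsmem.2 hsne⟩).symm
    refine ⟨hint, ?_⟩
    -- replace the integrand a.e.
    have hcongr : (∫ s in a..b, A * K s) = ∫ s in a..b, g s := by
      refine intervalIntegral.integral_congr_ae ?_
      filter_upwards [hne] with s hsne hsmem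
      rw [uIoc_of_le hab] at hsmem
      exact heq s ⟨le_of_lt hsmem.1, lt_of_le_of_ne hsmem.2 hsne⟩
    rw [hcongr]
    -- FTC
    have hderiv : ∀ t : ℝ, HasDerivAt (fun s => E s * P ^ k) (g t) t := by
      intro t
      have h : HasDerivAt (fun s => E s * P ^ k) (E t * A * P ^ k) t := by
        exact hasDerivAt_pi.2 fun i => hasDerivAt_pi.2 fun j =>
          matrix_exp_entry_hasDerivAt d A (P ^ k) t i j
      have : g t = E t * A * P ^ k := by
        rw [hg]
        simp only [← mul_assoc, hAE t]
      rw [this]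
      exact h
    exact intervalIntegral.integral_eq_sub_of_hasDerivAt
      (fun t _ => hderiv t) (hg_cont.intervalIntegrable a b)
  -- split the integral over the partition
  have hsplit : ∑ j ∈ Finset.range (m + 1), ∫ s in (u j)..(u (j + 1)), A * K s
      = ∫ s in (0:ℝ)..r, A * K s := by
    have := intervalIntegral.sum_integral_adjacent_intervals
      (a := u) (μ := volume) (f := fun s => A * K s) (n := m + 1)
      (fun j hj => (key (u j) (u (j + 1)) j (hu_le j (by omega))
        (hNu j (by omega))).1)
    rwa [hu0, hulast] at this
  have hsum : (∫ s in (0:ℝ)..r, A * K s)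
      = ∑ j ∈ Finset.range (m + 1), (E (u (j + 1)) * P ^ j - E (u j) * P ^ j) := by
    rw [← hsplit]
    refine Finset.sum_congr rfl fun j hj => ?_
    simp only [Finset.mem_range] at hj
    exact (key (u j) (u (j + 1)) j (hu_le j (by omega)) (hNu j (by omega))).2
  -- rewrite the jump sum
  have hjump : (∑ i ∈ (Finset.Icc 1 n).filter (fun i => tj i ≤ r),
        M * (NormedSpace.exp (tj i • A) * (1 + M) ^ (i - 1)))
      = ∑ j ∈ Finset.range m, M * (E (u (j + 1)) * P ^ j) := by
    rw [hfilter r, ← hm, ← Finset.Ico_add_one_right_eq_Icc, Finset.sum_Ico_eq_sum_range]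
    refine Finset.sum_congr (by norm_num) fun j hj => ?_
    simp only [Finset.mem_range] at hj
    have h1j : 1 + j = j + 1 := by omega
    rw [h1j, huj (j + 1) (by omega) (by omega)]
    norm_num
    rfl
  -- final telescoping computation
  have hf0 : E 0 * P ^ 0 = 1 := by
    simp only [hE, pow_zero, mul_one, zero_smul]
    exact NormedSpace.exp_zero
  have hterm : ∀ j, E (u (j + 1)) * P ^ j - E (u j) * P ^ j + M * (E (u (j + 1)) * P ^ j)
      = E (u (j + 1)) * P ^ (j + 1) - E (u j) * P ^ j := by
    intro j
    have : E (u (j + 1)) * P ^ j + M * (E (u (j + 1)) * P ^ j)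
        = E (u (j + 1)) * P ^ (j + 1) := by
      calc E (u (j + 1)) * P ^ j + M * (E (u (j + 1)) * P ^ j)
          = (P * E (u (j + 1))) * P ^ j := by
            rw [hP]; ring_nf; noncomm_ring
        _ = E (u (j + 1)) * P ^ (j + 1) := by
            rw [hPE, pow_succ']; noncomm_ring
    rw [sub_add_eq_add_sub, this]
  rw [hK r, ← hm, hsum, hjump, Finset.sum_range_succ]
  have htel : ∑ j ∈ Finset.range m, (E (u (j + 1)) * P ^ j - E (u j) * P ^ j)
      + ∑ j ∈ Finset.range m, M * (E (u (j + 1)) * P ^ j)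
      = E (u m) * P ^ m - 1 := by
    rw [← Finset.sum_add_distrib]
    calc ∑ j ∈ Finset.range m,
          (E (u (j + 1)) * P ^ j - E (u j) * P ^ j + M * (E (u (j + 1)) * P ^ j))
        = ∑ j ∈ Finset.range m,
          (E (u (j + 1)) * P ^ (j + 1) - E (u j) * P ^ j) := by
          exact Finset.sum_congr rfl fun j _ => hterm j
      _ = E (u m) * P ^ m - E (u 0) * P ^ 0 :=
          Finset.sum_range_sub (fun j => E (u j) * P ^ j) m
      _ = E (u m) * P ^ m - 1 := by rw [hu0, hf0]
  rw [hulast]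
  calc NormedSpace.exp (r • A) * (1 + M) ^ m
      = 1 + ((E (u m) * P ^ m - 1) + (E r * P ^ m - E (u m) * P ^ m)) := by
        simp only [hE, hP]; abel
    _ = 1 + (∑ j ∈ Finset.range m, (E (u (j + 1)) * P ^ j - E (u j) * P ^ j)
          + (E r * P ^ m - E (u m) * P ^ m))
        + ∑ j ∈ Finset.range m, M * (E (u (j + 1)) * P ^ j) := by
        rw [← htel]; abel
end

section
/- Let f : ℝ → ℝ be twice continuously differentiable with bounded second derivative, and let g : ℝ → ℝ be differentiable and bounded. If for every x ∈ ℝ, |g'(x) f(x) − f'(x) g(x)| > (1/2) · (sup_y |f''(y)|) · (sup_y |g(y)|)², then for every x ∈ ℝ, f(x + g(x)) − f(x) − g'(x) f(x) ≠ 0. -/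
open Set

lemma key_taylor (f : ℝ → ℝ) (hf : ContDiff ℝ 2 f) {C : ℝ}
    (hC : ∀ y, |deriv (deriv f) y| ≤ C) {a b : ℝ} (hab : a < b) :
    |f b - f a - deriv f a * (b - a)| ≤ C / 2 * (b - a) ^ 2 := by
  have hf1 : Differentiable ℝ f := hf.differentiable (by norm_num)
  have hf2 : Differentiable ℝ (deriv f) := by
    have := (contDiff_succ_iff_deriv (n := 1)).mp (by exact_mod_cast hf)
    exact this.2.2.differentiable (by norm_num)
  set s := Icc a b with hs
  have hu : UniqueDiffOn ℝ s := uniqueDiffOn_Icc hab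
  have hit1 : ∀ z ∈ s, iteratedDerivWithin 1 f s z = deriv f z := by
    intro z hz
    rw [show (1:ℕ) = 0+1 from rfl, iteratedDerivWithin_succ]
    simp only [iteratedDerivWithin_zero]
    exact (hf1 z).derivWithin (hu z hz)
  have hit2 : ∀ z ∈ s, iteratedDerivWithin 2 f s z = deriv (deriv f) z := by
    intro z hz
    rw [show (2:ℕ) = 1+1 from rfl, iteratedDerivWithin_succ,
      derivWithin_congr (fun y hy => hit1 y hy) (hit1 z hz)]
    exact (hf2 z).derivWithin (hu z hz)
  have hs' : uIcc a b = s := uIcc_of_le hab.le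
  have hs'' : uIoo a b = Ioo a b := uIoo_of_le hab.le
  obtain ⟨ξ, hξ, heq⟩ := taylor_mean_remainder_lagrange (n := 1) (x₀ := a) (x := b) hab.ne
    ((hf.of_le (by norm_num)).contDiffOn)
    (by rw [hs', hs'']
        exact ((hf2.differentiableOn).congr (fun y hy => hit1 y (Ioo_subset_Icc_self hy))))
  rw [hs', hs''] at *
  have hta : taylorWithinEval f 1 s a b = f a + deriv f a * (b - a) := by
    rw [show (1:ℕ) = 0+1 from rfl, taylorWithinEval_succ, taylor_within_zero_eval,
      hit1 a ⟨le_rfl, hab.le⟩]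
    simp [Nat.factorial]
    ring
  rw [hta] at heq
  have : f b - f a - deriv f a * (b - a) = deriv (deriv f) ξ * (b - a) ^ 2 / 2 := by
    rw [← hit2 ξ (Ioo_subset_Icc_self hξ)]
    rw [show f b - f a - deriv f a * (b - a) = f b - (f a + deriv f a * (b - a)) by ring, heq]
    norm_num [Nat.factorial]
  rw [this, abs_div, abs_mul, abs_pow, sq_abs]
  rw [abs_of_nonneg (by norm_num : (0:ℝ) ≤ 2)]
  rw [div_le_iff₀ (by norm_num : (0:ℝ) < 2)]
  have := hC ξ
  nlinarith [sq_nonneg (b - a), abs_nonneg (deriv (deriv f) ξ)]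

lemma key_taylor' (f : ℝ → ℝ) (hf : ContDiff ℝ 2 f) {C : ℝ}
    (hC : ∀ y, |deriv (deriv f) y| ≤ C) (x h : ℝ) :
    |f (x + h) - f x - deriv f x * h| ≤ C / 2 * h ^ 2 := by
  rcases lt_trichotomy h 0 with hh | hh | hh
  · set F : ℝ → ℝ := fun t => f (-t) with hF
    have hFc : ContDiff ℝ 2 F := hf.comp contDiff_neg
    have hF1 : ∀ t, deriv F t = -deriv f (-t) := fun t => deriv_comp_neg f t
    have hF2 : ∀ t, deriv (deriv F) t = deriv (deriv f) (-t) := by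
      intro t
      have : deriv F = fun t => -deriv f (-t) := funext hF1
      rw [this, deriv.fun_neg, deriv_comp_neg (deriv f) t, neg_neg]
    have hCF : ∀ y, |deriv (deriv F) y| ≤ C := by intro y; rw [hF2]; exact hC _
    have hab : -x < -(x + h) := by linarith
    have := key_taylor F hFc hCF hab
    simp only [hF1, neg_neg] at this; simp only [hF, neg_neg] at this
    have e1 : -(x + h) - -x = -h := by ring
    rw [e1] at this
    calc |f (x + h) - f x - deriv f x * h|
        = |f (x + h) - f x - -deriv f x * -h| := by ring_nf
      _ ≤ C / 2 * (-h) ^ 2 := this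
      _ = C / 2 * h ^ 2 := by ring
  · simp [hh]
  · have := key_taylor f hf hC (show x < x + h by linarith)
    simpa using this

/-- Wronskian criterion: if `f` is `C²` with bounded second derivative, `g` is
differentiable and bounded, and the Wronskian `W(f,g) = g'f − f'g` satisfies
`|W(f,g)(x)| > (1/2)‖f''‖_∞‖g‖_∞²` for all `x`, then the jump-perturbation function
`φ(x) = f(x + g(x)) − f(x) − g'(x)f(x)` never vanishes. -/
theorem wronskian_criterion
    (f g : ℝ → ℝ) (hf : ContDiff ℝ 2 f)
    (hf'' : ∃ C, ∀ y, |deriv (deriv f) y| ≤ C)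
    (hg : Differentiable ℝ g) (hgb : ∃ C, ∀ y, |g y| ≤ C)
    (h : ∀ x, (1 / 2) * (⨆ y, |deriv (deriv f) y|) * (⨆ y, |g y|) ^ 2
        < |deriv g x * f x - deriv f x * g x|) :
    ∀ x, f (x + g x) - f x - deriv g x * f x ≠ 0 := by
  obtain ⟨C₀, hC₀⟩ := hf''
  obtain ⟨D₀, hD₀⟩ := hgb
  set C := ⨆ y, |deriv (deriv f) y| with hCdef
  set D := ⨆ y, |g y| with hDdef
  have hbC : BddAbove (Set.range fun y => |deriv (deriv f) y|) :=
    ⟨C₀, by rintro _ ⟨y, rfl⟩; exact hC₀ y⟩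
  have hbD : BddAbove (Set.range fun y => |g y|) :=
    ⟨D₀, by rintro _ ⟨y, rfl⟩; exact hD₀ y⟩
  have hC : ∀ y, |deriv (deriv f) y| ≤ C := fun y => le_ciSup hbC y
  have hD : ∀ y, |g y| ≤ D := fun y => le_ciSup hbD y
  have hD0 : 0 ≤ D := (abs_nonneg _).trans (hD 0)
  intro x hx0
  have hR := key_taylor' f hf hC x (g x)
  have hgD : (g x) ^ 2 ≤ D ^ 2 := by
    rw [← sq_abs]
    exact pow_le_pow_left₀ (abs_nonneg _) (hD x) 2
  have hW := h x
  have hRe : f (x + g x) - f x - deriv f x * g x = deriv g x * f x - deriv f x * g x := by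
    linarith
  rw [hRe] at hR
  have hC0 : 0 ≤ C := (abs_nonneg _).trans (hC 0)
  nlinarith [abs_nonneg (deriv g x * f x - deriv f x * g x)]
end

section
/- For every x ∈ ℝ, cos(x + sin x) − cos x − cos²x ≠ 0. -/
/-- For every `x ∈ ℝ`, `cos(x + sin x) − cos x − cos²x ≠ 0`. -/
theorem cos_sin_jump_perturbation_ne_zero (x : ℝ) :
    Real.cos (x + Real.sin x) - Real.cos x - (Real.cos x) ^ 2 ≠ 0 := by
  set s := Real.sin x with hs
  have habs : |s| ≤ 1 := Real.abs_sin_le_one x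
  have hpy : s ^ 2 + Real.cos x ^ 2 = 1 := Real.sin_sq_add_cos_sq x
  have hadd : Real.cos (x + s) = Real.cos x * Real.cos s - s * Real.sin s := Real.cos_add x s
  have h1 : 1 - s ^ 2 / 2 ≤ Real.cos s := Real.one_sub_sq_div_two_le_cos
  have h2 : Real.cos s ≤ 1 := Real.cos_le_one s
  have hc1 : Real.cos x ≤ 1 := Real.cos_le_one x
  have hc2 : -1 ≤ Real.cos x := Real.neg_one_le_cos x
  have h3 : s * (s - Real.sin s) ≤ s ^ 4 / 4 := by
    rcases lt_trichotomy s 0 with h | h | h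
    · have h' : -s ≤ 1 := by rw [abs_of_neg h] at habs; exact habs
      have := Real.sin_gt_sub_cube (neg_pos.2 h)
      rw [Real.sin_neg] at this
      nlinarith
    · simp [h]
    · have h' : s ≤ 1 := by rw [abs_of_pos h] at habs; exact habs
      have := Real.sin_gt_sub_cube h
      nlinarith
  have hlt : Real.cos (x + s) - Real.cos x - Real.cos x ^ 2 < 0 := by
    rw [hadd]
    nlinarith [sq_nonneg s, sq_nonneg (s^2)]
  exact ne_of_lt hlt
end
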